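/- Let u be a regular linear functional on 𝒫 satisfying D_{q,ω}(φu) = ψu, with φ(x) = ax² + bx + c and ψ(x) = dx + e not both zero, and let (P_n)_{n≥0} be the monic OPS with respect to u (so d ≠ 0 and dq + a ≠ 0 by admissibility). Then the first recurrence coefficient γ₁ := ⟨u, P₁²⟩/⟨u, 1⟩ satisfies γ₁ = −(1/(dq + a))·φ(−e/d); equivalently, with u_n := ⟨u, x^n⟩, one has u₁ = −(e/d)·u₀ and u₂ = −(1/(dq+a))·(−(qe+b)(e/d) + c)·u₀. -/

import Mathlib

open Polynomial

noncomputable section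

namespace HahnOPSPaper

/-- The algebraic dual of the space of complex polynomials. -/
abbrev PDual : Type := Module.Dual ℂ (Polynomial ℂ)

/-- Left multiplication of a functional by a polynomial: `⟨φu, f⟩ = ⟨u, φf⟩`. -/
def pMul (φ : Polynomial ℂ) (u : PDual) : PDual := u ∘ₗ LinearMap.mulLeft ℂ φ

/-- Distributional derivative: `⟨Du, f⟩ = -⟨u, f'⟩`. -/
def dDeriv (u : PDual) : PDual :=
  -(u ∘ₗ (Polynomial.derivative : Polynomial ℂ →ₗ[ℂ] Polynomial ℂ))

/-- The q-bracket `[n]_q = 1 + q + ⋯ + q^(n-1)`. -/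
def qBracket (q : ℂ) (n : ℕ) : ℂ := ∑ i ∈ Finset.range n, q ^ i

/-- q-factorial `[n]_q!`. -/
def qFact (q : ℂ) (n : ℕ) : ℂ := ∏ i ∈ Finset.range n, qBracket q (i + 1)

/-- `D` is Hahn's operator `D_{q,ω}`, i.e. the (unique, for `(q,ω) ≠ (1,0)`) linear operator
with `((q-1)x + ω)·(Df)(x) = f(qx+ω) - f(x)`. -/
def IsHahn (q ω : ℂ) (D : Polynomial ℂ →ₗ[ℂ] Polynomial ℂ) : Prop :=
  ∀ f : Polynomial ℂ, (C (q - 1) * X + C ω) * D f = f.comp (C q * X + C ω) - f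

/-- The operator `(L_{q,ω} f)(x) = f(qx + ω)`. -/
def Lop (q ω : ℂ) : Polynomial ℂ →ₗ[ℂ] Polynomial ℂ :=
  (aeval (C q * X + C ω)).toLinearMap

/-- The distributional Hahn operator `D_{q,ω}` on the dual, built from the ordinary operator
`D*_{q,ω} = D_{1/q,-ω/q}`: `⟨D_{q,ω}u, f⟩ = -q⁻¹·⟨u, D*_{q,ω}f⟩`. -/
def hahnDual (q : ℂ) (Dstar : Polynomial ℂ →ₗ[ℂ] Polynomial ℂ) (u : PDual) : PDual :=
  (-q⁻¹) • (u ∘ₗ Dstar)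

/-- The distributional operator `L_{q,ω}`: `⟨L_{q,ω}u, f⟩ = q⁻¹·⟨u, L_{1/q,-ω/q}f⟩`. -/
def LDual (q ω : ℂ) (u : PDual) : PDual := q⁻¹ • (u ∘ₗ Lop q⁻¹ (-ω / q))

/-- A functional is regular if it admits a monic orthogonal polynomial sequence. -/
def IsRegularFunc (u : PDual) : Prop :=
  ∃ P : ℕ → Polynomial ℂ, (∀ n, (P n).Monic ∧ (P n).natDegree = n) ∧
    (∀ m n, m ≠ n → u (P m * P n) = 0) ∧ (∀ n, u (P n ^ 2) ≠ 0)

/-- `P` is the monic OPS with respect to `u`. -/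
def IsMonicOPS (u : PDual) (P : ℕ → Polynomial ℂ) : Prop :=
  (∀ n, (P n).Monic ∧ (P n).natDegree = n) ∧
    (∀ m n, m ≠ n → u (P m * P n) = 0) ∧ (∀ n, u (P n ^ 2) ≠ 0)

/-- Continuous case: `d_n = d + a·n`. -/
def ddC (a d : ℂ) (n : ℕ) : ℂ := d + a * n

/-- Continuous case: `e_n = e + b·n`. -/
def eeC (b e : ℂ) (n : ℕ) : ℂ := e + b * n

/-- Continuous case: `β_n = n·e_{n-1}/d_{2n-2} - (n+1)·e_n/d_{2n}`. -/
def betaC (a b d e : ℂ) (n : ℕ) : ℂ :=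
  n * eeC b e (n - 1) / ddC a d (2 * n - 2) - (n + 1) * eeC b e n / ddC a d (2 * n)

/-- Continuous case: `γ_{n+1} = -((n+1)·d_{n-1}/(d_{2n-1}·d_{2n+1}))·φ(-e_n/d_{2n})`. -/
def gammaC (a b d e : ℂ) (φ : Polynomial ℂ) (n : ℕ) : ℂ :=
  -((n + 1) * ddC a d (n - 1) / (ddC a d (2 * n - 1) * ddC a d (2 * n + 1))) *
    φ.eval (-(eeC b e n) / ddC a d (2 * n))

/-- `d_n = d·q^n + a·[n]_q`. -/
def ddQ (q a d : ℂ) (n : ℕ) : ℂ := d * q ^ n + a * qBracket q n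

/-- `e_n = e·q^n + (ω·d_n + b)·[n]_q`. -/
def eeQ (q ω a b d e : ℂ) (n : ℕ) : ℂ :=
  e * q ^ n + (ω * ddQ q a d n + b) * qBracket q n

/-- `β_n = ω[n]_q + [n]_q·e_{n-1}/d_{2n-2} - [n+1]_q·e_n/d_{2n}`. -/
def betaQ (q ω a b d e : ℂ) (n : ℕ) : ℂ :=
  ω * qBracket q n + qBracket q n * eeQ q ω a b d e (n - 1) / ddQ q a d (2 * n - 2)
    - qBracket q (n + 1) * eeQ q ω a b d e n / ddQ q a d (2 * n)

/-- `γ_{n+1} = -(q^n·[n+1]_q·d_{n-1}/(d_{2n-1}·d_{2n+1}))·φ(-e_n/d_{2n})`. -/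
def gammaQ (q ω a b d e : ℂ) (φ : Polynomial ℂ) (n : ℕ) : ℂ :=
  -(q ^ n * qBracket q (n + 1) * ddQ q a d (n - 1) /
      (ddQ q a d (2 * n - 1) * ddQ q a d (2 * n + 1))) *
    φ.eval (-(eeQ q ω a b d e n) / ddQ q a d (2 * n))

/-- `Φ(x;n) = ∏_{j=1}^n φ(q^j x + ω[j]_q)`. -/
def PhiQ (q ω : ℂ) (φ : Polynomial ℂ) (n : ℕ) : Polynomial ℂ :=
  ∏ j ∈ Finset.range n, φ.comp (C (q ^ (j + 1)) * X + C (ω * qBracket q (j + 1)))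

/-- `k_n = q^{n(n-3)/2}·∏_{j=0}^{n-1} d_{n+j-1}⁻¹`. -/
def kQ (q a d : ℂ) (n : ℕ) : ℂ :=
  q ^ (((n : ℤ) * ((n : ℤ) - 3)) / 2) * ∏ j ∈ Finset.range n, (ddQ q a d (n + j - 1))⁻¹


lemma uAdd (u : PDual) (f g : Polynomial ℂ) : u (f + g) = u f + u g := map_add u f g

lemma uC (u : PDual) (α : ℂ) (f : Polynomial ℂ) : u (C α * f) = α * u f := by
  rw [← smul_eq_C_mul, map_smul, smul_eq_mul]

lemma uCc (u : PDual) (α : ℂ) : u (C α) = α * u 1 := by rw [← mul_one (C α), uC]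

lemma monicShape2 {f : Polynomial ℂ} (h : f.Monic) (hd : f.natDegree = 2) :
    f = X^2 + C (f.coeff 1) * X + C (f.coeff 0) := by
  have h4 : f.natDegree < 3 := by omega
  have hc : f.coeff 2 = 1 := by have := h.coeff_natDegree; rwa [hd] at this
  nth_rewrite 1 [f.as_sum_range' 3 h4]
  simp only [Finset.sum_range_succ, Finset.sum_range_zero, ← C_mul_X_pow_eq_monomial, hc]
  simp
  ring

lemma monicShape3 {f : Polynomial ℂ} (h : f.Monic) (hd : f.natDegree = 3) :
    f = X^3 + C (f.coeff 2) * X^2 + C (f.coeff 1) * X + C (f.coeff 0) := by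
  have h4 : f.natDegree < 4 := by omega
  have hc : f.coeff 3 = 1 := by have := h.coeff_natDegree; rwa [hd] at this
  nth_rewrite 1 [f.as_sum_range' 4 h4]
  simp only [Finset.sum_range_succ, Finset.sum_range_zero, ← C_mul_X_pow_eq_monomial, hc]
  simp
  ring

set_option maxHeartbeats 4000000 in
theorem stmt_19 (q ω : ℂ) (hq0 : q ≠ 0) (hqω : q ≠ 1 ∨ ω ≠ 0)
    (hqr : ∀ n : ℕ, 0 < n → q ^ n = 1 → q = 1)
    (a b c d e : ℂ) (φ ψ : Polynomial ℂ)
    (hφ : φ = C a * X ^ 2 + C b * X + C c) (hψ : ψ = C d * X + C e)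
    (hne : φ ≠ 0 ∨ ψ ≠ 0)
    (Dstar : Polynomial ℂ →ₗ[ℂ] Polynomial ℂ) (hDstar : IsHahn q⁻¹ (-ω / q) Dstar)
    (u : PDual) (hreg : IsRegularFunc u)
    (heq : hahnDual q Dstar (pMul φ u) = pMul ψ u)
    (P : ℕ → Polynomial ℂ) (hP : IsMonicOPS u P) :
    u (P 1 ^ 2) / u 1 = -(1 / (d * q + a)) * φ.eval (-e / d) ∧
    u X = -(e / d) * u 1 ∧
    u (X ^ 2) = -(1 / (d * q + a)) * (-((q * e + b) * (e / d)) + c) * u 1 := by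
  obtain ⟨hPmon, hPorth, hPne⟩ := hP
  have hqq : q * q⁻¹ = 1 := mul_inv_cancel₀ hq0
  have h1q : (1 : ℂ) + q ≠ 0 := by
    intro h
    have hq2 : q ^ 2 = 1 := by linear_combination (q - 1) * h
    have h1 := hqr 2 (by norm_num) hq2
    rw [h1] at h; norm_num at h
  have h2q : (1 : ℂ) + q + q ^ 2 ≠ 0 := by
    intro h
    have hq3 : q ^ 3 = 1 := by linear_combination (q - 1) * h
    have h1 := hqr 3 (by norm_num) hq3
    rw [h1] at h; norm_num at h
  have h3q : (1 : ℂ) + q + q ^ 2 + q ^ 3 ≠ 0 := by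
    intro h
    have hq4 : q ^ 4 = 1 := by linear_combination (q - 1) * h
    have h1 := hqr 4 (by norm_num) hq4
    rw [h1] at h; norm_num at h
  have hm : (C (q⁻¹ - 1) * X + C (-ω / q) : Polynomial ℂ) ≠ 0 := by
    intro hz
    have hc1 : q⁻¹ - 1 = 0 := by
      have := congrArg (fun f : Polynomial ℂ => f.coeff 1) hz
      simpa using this
    have hc0 : -ω / q = 0 := by
      have := congrArg (fun f : Polynomial ℂ => f.coeff 0) hz
      simpa using this
    have hq1 : q = 1 := by
      have h1 : q⁻¹ = 1 := by linear_combination hc1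
      exact inv_eq_one.mp h1
    have hω : ω = 0 := by
      rw [_root_.div_eq_zero_iff] at hc0
      rcases hc0 with h1 | h1
      · linear_combination -h1
      · exact absurd h1 hq0
    rcases hqω with h | h
    · exact h hq1
    · exact h hω
  have hE : ∀ f : Polynomial ℂ, -q⁻¹ * u (φ * Dstar f) = u (ψ * f) := by
    intro f
    have h := LinearMap.congr_fun heq f
    simpa [hahnDual, pMul, smul_eq_mul] using h
  have hD0 : Dstar 1 = 0 := by
    apply mul_left_cancel₀ hm
    rw [hDstar]; simp
  have hD1 : Dstar X = 1 := by
    apply mul_left_cancel₀ hm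
    rw [hDstar]; simp only [X_comp, mul_one, C_sub, C_1]; ring
  have hD2 : Dstar (X ^ 2) = C (1 + q⁻¹) * X + C (-q⁻¹*ω) := by
    apply mul_left_cancel₀ hm
    rw [hDstar, X_pow_comp]
    simp only [div_eq_mul_inv, neg_mul, C_neg, C_mul, C_add, C_sub, C_1, C_pow, map_ofNat]
    ring
  have hD3 : Dstar (X ^ 3) = C (1 + q⁻¹ + q⁻¹ ^ 2) * X ^ 2 + C (-q⁻¹*ω - 2*q⁻¹ ^ 2*ω) * X + C (q⁻¹ ^ 2*ω ^ 2) := by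
    apply mul_left_cancel₀ hm
    rw [hDstar, X_pow_comp]
    simp only [div_eq_mul_inv, neg_mul, C_neg, C_mul, C_add, C_sub, C_1, C_pow, map_ofNat]
    ring
  have hD4 : Dstar (X ^ 4) = C (1 + q⁻¹ + q⁻¹ ^ 2 + q⁻¹ ^ 3) * X ^ 3 + C (-q⁻¹*ω - 2*q⁻¹ ^ 2*ω - 3*q⁻¹ ^ 3*ω) * X ^ 2 + C (q⁻¹ ^ 2*ω ^ 2 + 3*q⁻¹ ^ 3*ω ^ 2) * X + C (-q⁻¹ ^ 3*ω ^ 3) := by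
    apply mul_left_cancel₀ hm
    rw [hDstar, X_pow_comp]
    simp only [div_eq_mul_inv, neg_mul, C_neg, C_mul, C_add, C_sub, C_1, C_pow, map_ofNat]
    ring
  have hD5 : Dstar (X ^ 5) = C (1 + q⁻¹ + q⁻¹ ^ 2 + q⁻¹ ^ 3 + q⁻¹ ^ 4) * X ^ 4 + C (-q⁻¹*ω - 2*q⁻¹ ^ 2*ω - 3*q⁻¹ ^ 3*ω - 4*q⁻¹ ^ 4*ω) * X ^ 3 + C (q⁻¹ ^ 2*ω ^ 2 + 3*q⁻¹ ^ 3*ω ^ 2 + 6*q⁻¹ ^ 4*ω ^ 2) * X ^ 2 + C (-q⁻¹ ^ 3*ω ^ 3 - 4*q⁻¹ ^ 4*ω ^ 3) * X + C (q⁻¹ ^ 4*ω ^ 4) := by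
    apply mul_left_cancel₀ hm
    rw [hDstar, X_pow_comp]
    simp only [div_eq_mul_inv, neg_mul, C_neg, C_mul, C_add, C_sub, C_1, C_pow, map_ofNat]
    ring
  have hf0 : d * (u X) + e * (u 1) = 0 := by
    have h := hE 1
    rw [hD0] at h
    have hp2 : ψ * 1 = C d * X + C e := by rw [hψ]; ring
    rw [hp2] at h
    simp only [mul_zero, map_zero, uAdd, uC, uCc] at h
    linear_combination -h
  have hf1 : (a + q*d) * (u (X ^ 2)) + (b + q*e) * (u X) + (c) * (u 1) = 0 := by
    have h := hE X
    rw [hD1, mul_one, hφ] at h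
    have hp2 : ψ * X = C d * X ^ 2 + C e * X := by rw [hψ]; ring
    rw [hp2] at h
    simp only [uAdd, uC, uCc] at h
    linear_combination (-q ^ 1) * h - (c*(u 1) + b*(u X) + a*(u (X ^ 2))) * hqq
  have hf2 : (a + q*a + q ^ 2*d) * (u (X ^ 3)) + (b - ω*a + q*b + q ^ 2*e) * (u (X ^ 2)) + (c - ω*b + q*c) * (u X) + (-ω*c) * (u 1) = 0 := by
    have h := hE (X ^ 2)
    rw [hD2, hφ] at h
    have hp1 : (C a * X ^ 2 + C b * X + C c) * (C (1 + q⁻¹) * X + C (-q⁻¹*ω)) = C (a + q⁻¹*a) * X ^ 3 + C (b + q⁻¹*b - q⁻¹*ω*a) * X ^ 2 + C (c + q⁻¹*c - q⁻¹*ω*b) * X + C (-q⁻¹*ω*c) := by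
      simp only [div_eq_mul_inv, neg_mul, C_neg, C_mul, C_add, C_sub, C_1, C_pow, map_ofNat]
      ring
    have hp2 : ψ * X ^ 2 = C d * X ^ 3 + C e * X ^ 2 := by rw [hψ]; ring
    rw [hp1] at h
    rw [hp2] at h
    simp only [uAdd, uC, uCc] at h
    linear_combination (-q ^ 2) * h - (c*(u X) + b*(u (X ^ 2)) + a*(u (X ^ 3)) - ω*c*(u 1) - ω*b*(u X) - ω*a*(u (X ^ 2)) + q*c*(u X) + q*b*(u (X ^ 2)) + q*a*(u (X ^ 3)) + q*q⁻¹*c*(u X) + q*q⁻¹*b*(u (X ^ 2)) + q*q⁻¹*a*(u (X ^ 3)) - q*q⁻¹*ω*c*(u 1) - q*q⁻¹*ω*b*(u X) - q*q⁻¹*ω*a*(u (X ^ 2))) * hqq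
  have hf3 : (a + q*a + q ^ 2*a + q ^ 3*d) * (u (X ^ 4)) + (b - 2*ω*a + q*b - q*ω*a + q ^ 2*b + q ^ 3*e) * (u (X ^ 3)) + (c - 2*ω*b + ω ^ 2*a + q*c - q*ω*b + q ^ 2*c) * (u (X ^ 2)) + (-2*ω*c + ω ^ 2*b - q*ω*c) * (u X) + (ω ^ 2*c) * (u 1) = 0 := by
    have h := hE (X ^ 3)
    rw [hD3, hφ] at h
    have hp1 : (C a * X ^ 2 + C b * X + C c) * (C (1 + q⁻¹ + q⁻¹ ^ 2) * X ^ 2 + C (-q⁻¹*ω - 2*q⁻¹ ^ 2*ω) * X + C (q⁻¹ ^ 2*ω ^ 2)) = C (a + q⁻¹*a + q⁻¹ ^ 2*a) * X ^ 4 + C (b + q⁻¹*b - q⁻¹*ω*a + q⁻¹ ^ 2*b - 2*q⁻¹ ^ 2*ω*a) * X ^ 3 + C (c + q⁻¹*c - q⁻¹*ω*b + q⁻¹ ^ 2*c - 2*q⁻¹ ^ 2*ω*b + q⁻¹ ^ 2*ω ^ 2*a) * X ^ 2 + C (-q⁻¹*ω*c - 2*q⁻¹ ^ 2*ω*c + q⁻¹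 ^ 2*ω ^ 2*b) * X + C (q⁻¹ ^ 2*ω ^ 2*c) := by
      simp only [div_eq_mul_inv, neg_mul, C_neg, C_mul, C_add, C_sub, C_1, C_pow, map_ofNat]
      ring
    have hp2 : ψ * X ^ 3 = C d * X ^ 4 + C e * X ^ 3 := by rw [hψ]; ring
    rw [hp1] at h
    rw [hp2] at h
    simp only [uAdd, uC, uCc] at h
    linear_combination (-q ^ 3) * h - (c*(u (X ^ 2)) + b*(u (X ^ 3)) + a*(u (X ^ 4)) - 2*ω*c*(u X) - 2*ω*b*(u (X ^ 2)) - 2*ω*a*(u (X ^ 3)) + ω ^ 2*c*(u 1) + ω ^ 2*b*(u X) + ω ^ 2*a*(u (X ^ 2)) + q*c*(u (X ^ 2)) + q*b*(u (X ^ 3)) + q*a*(u (X ^ 4)) - q*ω*c*(u X) - q*ω*b*(u (X ^ 2)) - q*ω*a*(u (X ^ 3)) + q*q⁻¹*c*(u (X ^ 2)) + q*q⁻¹*b*(u (X ^ 3)) + q*q⁻¹*a*(u (X ^ 4)) - 2*q*q⁻¹*ω*c*(u X) - 2*q*q⁻¹*ω*b*(u (X ^ 2)) - 2*q*q⁻¹*ω*a*(u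 (X ^ 3)) + q*q⁻¹*ω ^ 2*c*(u 1) + q*q⁻¹*ω ^ 2*b*(u X) + q*q⁻¹*ω ^ 2*a*(u (X ^ 2)) + q ^ 2*c*(u (X ^ 2)) + q ^ 2*b*(u (X ^ 3)) + q ^ 2*a*(u (X ^ 4)) + q ^ 2*q⁻¹*c*(u (X ^ 2)) + q ^ 2*q⁻¹*b*(u (X ^ 3)) + q ^ 2*q⁻¹*a*(u (X ^ 4)) - q ^ 2*q⁻¹*ω*c*(u X) - q ^ 2*q⁻¹*ω*b*(u (X ^ 2)) - q ^ 2*q⁻¹*ω*a*(u (X ^ 3)) + q ^ 2*q⁻¹ ^ 2*c*(u (X ^ 2)) + q ^ 2*q⁻¹ ^ 2*b*(u (X ^ 3)) + q ^ 2*q⁻¹ ^ 2*a*(u (X ^ 4)) - 2*q ^ 2*q⁻¹ ^ 2*ω*c*(u X) - 2*q ^ 2*q⁻¹ ^ 2*ω*b*(u (X ^ 2)) - 2*q ^ 2*q⁻¹ ^ 2*ω*a*(u (X ^ 3)) + q ^ 2*q⁻¹ ^ 2*ω ^ 2*c*(u 1) + q ^ 2*q⁻¹ ^ 2*ω ^ 2*b*(u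 X) + q ^ 2*q⁻¹ ^ 2*ω ^ 2*a*(u (X ^ 2))) * hqq
  have hf4 : (a + q*a + q ^ 2*a + q ^ 3*a + q ^ 4*d) * (u (X ^ 5)) + (b - 3*ω*a + q*b - 2*q*ω*a + q ^ 2*b - q ^ 2*ω*a + q ^ 3*b + q ^ 4*e) * (u (X ^ 4)) + (c - 3*ω*b + 3*ω ^ 2*a + q*c - 2*q*ω*b + q*ω ^ 2*a + q ^ 2*c - q ^ 2*ω*b + q ^ 3*c) * (u (X ^ 3)) + (-3*ω*c + 3*ω ^ 2*b - ω ^ 3*a - 2*q*ω*c + q*ω ^ 2*b - q ^ 2*ω*c) * (u (X ^ 2)) + (3*ω ^ 2*c - ω ^ 3*b + q*ω ^ 2*c) * (u X) + (-ω ^ 3*c) * (u 1) = 0 := by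
    have h := hE (X ^ 4)
    rw [hD4, hφ] at h
    have hp1 : (C a * X ^ 2 + C b * X + C c) * (C (1 + q⁻¹ + q⁻¹ ^ 2 + q⁻¹ ^ 3) * X ^ 3 + C (-q⁻¹*ω - 2*q⁻¹ ^ 2*ω - 3*q⁻¹ ^ 3*ω) * X ^ 2 + C (q⁻¹ ^ 2*ω ^ 2 + 3*q⁻¹ ^ 3*ω ^ 2) * X + C (-q⁻¹ ^ 3*ω ^ 3)) = C (a + q⁻¹*a + q⁻¹ ^ 2*a + q⁻¹ ^ 3*a) * X ^ 5 + C (b + q⁻¹*b - q⁻¹*ω*a + q⁻¹ ^ 2*b - 2*q⁻¹ ^ 2*ω*a + q⁻¹ ^ 3*b - 3*q⁻¹ ^ 3*ω*a) * X ^ 4 + C (c + q⁻¹*c - q⁻¹*ω*b + q⁻¹ ^ 2*c - 2*q⁻¹ ^ 2*ω*b + q⁻¹ ^ 2*ω ^ 2*a + q⁻¹ ^ 3*c - 3*q⁻¹ ^ 3*ω*b + 3*q⁻¹ ^ 3*ω ^ 2*a) * X ^ 3 + C (-q⁻¹*ω*c - 2*q⁻¹ ^ 2*ω*c + q⁻¹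 ^ 2*ω ^ 2*b - 3*q⁻¹ ^ 3*ω*c + 3*q⁻¹ ^ 3*ω ^ 2*b - q⁻¹ ^ 3*ω ^ 3*a) * X ^ 2 + C (q⁻¹ ^ 2*ω ^ 2*c + 3*q⁻¹ ^ 3*ω ^ 2*c - q⁻¹ ^ 3*ω ^ 3*b) * X + C (-q⁻¹ ^ 3*ω ^ 3*c) := by
      simp only [div_eq_mul_inv, neg_mul, C_neg, C_mul, C_add, C_sub, C_1, C_pow, map_ofNat]
      ring
    have hp2 : ψ * X ^ 4 = C d * X ^ 5 + C e * X ^ 4 := by rw [hψ]; ring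
    rw [hp1] at h
    rw [hp2] at h
    simp only [uAdd, uC, uCc] at h
    linear_combination (-q ^ 4) * h - (c*(u (X ^ 3)) + b*(u (X ^ 4)) + a*(u (X ^ 5)) - 3*ω*c*(u (X ^ 2)) - 3*ω*b*(u (X ^ 3)) - 3*ω*a*(u (X ^ 4)) + 3*ω ^ 2*c*(u X) + 3*ω ^ 2*b*(u (X ^ 2)) + 3*ω ^ 2*a*(u (X ^ 3)) - ω ^ 3*c*(u 1) - ω ^ 3*b*(u X) - ω ^ 3*a*(u (X ^ 2)) + q*c*(u (X ^ 3)) + q*b*(u (X ^ 4)) + q*a*(u (X ^ 5)) - 2*q*ω*c*(u (X ^ 2)) - 2*q*ω*b*(u (X ^ 3)) - 2*q*ω*a*(u (X ^ 4)) + q*ω ^ 2*c*(u X) + q*ω ^ 2*b*(u (X ^ 2)) + q*ω ^ 2*a*(u (X ^ 3)) + q*q⁻¹*c*(u (X ^ 3)) + q*q⁻¹*b*(u (X ^ 4)) + q*q⁻¹*a*(u (X ^ 5)) - 3*q*q⁻¹*ω*c*(u (X ^ 2)) - 3*q*q⁻¹*ω*b*(u (X ^ 3)) - 3*q*q⁻¹*ω*a*(u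 (X ^ 4)) + 3*q*q⁻¹*ω ^ 2*c*(u X) + 3*q*q⁻¹*ω ^ 2*b*(u (X ^ 2)) + 3*q*q⁻¹*ω ^ 2*a*(u (X ^ 3)) - q*q⁻¹*ω ^ 3*c*(u 1) - q*q⁻¹*ω ^ 3*b*(u X) - q*q⁻¹*ω ^ 3*a*(u (X ^ 2)) + q ^ 2*c*(u (X ^ 3)) + q ^ 2*b*(u (X ^ 4)) + q ^ 2*a*(u (X ^ 5)) - q ^ 2*ω*c*(u (X ^ 2)) - q ^ 2*ω*b*(u (X ^ 3)) - q ^ 2*ω*a*(u (X ^ 4)) + q ^ 2*q⁻¹*c*(u (X ^ 3)) + q ^ 2*q⁻¹*b*(u (X ^ 4)) + q ^ 2*q⁻¹*a*(u (X ^ 5)) - 2*q ^ 2*q⁻¹*ω*c*(u (X ^ 2)) - 2*q ^ 2*q⁻¹*ω*b*(u (X ^ 3)) - 2*q ^ 2*q⁻¹*ω*a*(u (X ^ 4)) + q ^ 2*q⁻¹*ω ^ 2*c*(u X) + q ^ 2*q⁻¹*ω ^ 2*b*(u (X ^ 2)) + q ^ 2*q⁻¹*ω ^ 2*a*(u (X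 ^ 3)) + q ^ 2*q⁻¹ ^ 2*c*(u (X ^ 3)) + q ^ 2*q⁻¹ ^ 2*b*(u (X ^ 4)) + q ^ 2*q⁻¹ ^ 2*a*(u (X ^ 5)) - 3*q ^ 2*q⁻¹ ^ 2*ω*c*(u (X ^ 2)) - 3*q ^ 2*q⁻¹ ^ 2*ω*b*(u (X ^ 3)) - 3*q ^ 2*q⁻¹ ^ 2*ω*a*(u (X ^ 4)) + 3*q ^ 2*q⁻¹ ^ 2*ω ^ 2*c*(u X) + 3*q ^ 2*q⁻¹ ^ 2*ω ^ 2*b*(u (X ^ 2)) + 3*q ^ 2*q⁻¹ ^ 2*ω ^ 2*a*(u (X ^ 3)) - q ^ 2*q⁻¹ ^ 2*ω ^ 3*c*(u 1) - q ^ 2*q⁻¹ ^ 2*ω ^ 3*b*(u X) - q ^ 2*q⁻¹ ^ 2*ω ^ 3*a*(u (X ^ 2)) + q ^ 3*c*(u (X ^ 3)) + q ^ 3*b*(u (X ^ 4)) + q ^ 3*a*(u (X ^ 5)) + q ^ 3*q⁻¹*c*(u (X ^ 3)) + q ^ 3*q⁻¹*b*(u (X ^ 4)) + q ^ 3*q⁻¹*a*(u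 (X ^ 5)) - q ^ 3*q⁻¹*ω*c*(u (X ^ 2)) - q ^ 3*q⁻¹*ω*b*(u (X ^ 3)) - q ^ 3*q⁻¹*ω*a*(u (X ^ 4)) + q ^ 3*q⁻¹ ^ 2*c*(u (X ^ 3)) + q ^ 3*q⁻¹ ^ 2*b*(u (X ^ 4)) + q ^ 3*q⁻¹ ^ 2*a*(u (X ^ 5)) - 2*q ^ 3*q⁻¹ ^ 2*ω*c*(u (X ^ 2)) - 2*q ^ 3*q⁻¹ ^ 2*ω*b*(u (X ^ 3)) - 2*q ^ 3*q⁻¹ ^ 2*ω*a*(u (X ^ 4)) + q ^ 3*q⁻¹ ^ 2*ω ^ 2*c*(u X) + q ^ 3*q⁻¹ ^ 2*ω ^ 2*b*(u (X ^ 2)) + q ^ 3*q⁻¹ ^ 2*ω ^ 2*a*(u (X ^ 3)) + q ^ 3*q⁻¹ ^ 3*c*(u (X ^ 3)) + q ^ 3*q⁻¹ ^ 3*b*(u (X ^ 4)) + q ^ 3*q⁻¹ ^ 3*a*(u (X ^ 5)) - 3*q ^ 3*q⁻¹ ^ 3*ω*c*(u (X ^ 2)) - 3*q ^ 3*q⁻¹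 ^ 3*ω*b*(u (X ^ 3)) - 3*q ^ 3*q⁻¹ ^ 3*ω*a*(u (X ^ 4)) + 3*q ^ 3*q⁻¹ ^ 3*ω ^ 2*c*(u X) + 3*q ^ 3*q⁻¹ ^ 3*ω ^ 2*b*(u (X ^ 2)) + 3*q ^ 3*q⁻¹ ^ 3*ω ^ 2*a*(u (X ^ 3)) - q ^ 3*q⁻¹ ^ 3*ω ^ 3*c*(u 1) - q ^ 3*q⁻¹ ^ 3*ω ^ 3*b*(u X) - q ^ 3*q⁻¹ ^ 3*ω ^ 3*a*(u (X ^ 2))) * hqq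
  have hf5 : (a + q*a + q ^ 2*a + q ^ 3*a + q ^ 4*a + q ^ 5*d) * (u (X ^ 6)) + (b - 4*ω*a + q*b - 3*q*ω*a + q ^ 2*b - 2*q ^ 2*ω*a + q ^ 3*b - q ^ 3*ω*a + q ^ 4*b + q ^ 5*e) * (u (X ^ 5)) + (c - 4*ω*b + 6*ω ^ 2*a + q*c - 3*q*ω*b + 3*q*ω ^ 2*a + q ^ 2*c - 2*q ^ 2*ω*b + q ^ 2*ω ^ 2*a + q ^ 3*c - q ^ 3*ω*b + q ^ 4*c) * (u (X ^ 4)) + (-4*ω*c + 6*ω ^ 2*b - 4*ω ^ 3*a - 3*q*ω*c + 3*q*ω ^ 2*b - q*ω ^ 3*a - 2*q ^ 2*ω*c + q ^ 2*ω ^ 2*b - q ^ 3*ω*c) * (u (X ^ 3)) + (6*ω ^ 2*c - 4*ω ^ 3*b + ω ^ 4*a + 3*q*ω ^ 2*c - q*ω ^ 3*b + q ^ 2*ω ^ 2*c) * (u (X ^ 2)) + (-4*ω ^ 3*c + ω ^ 4*b - q*ω ^ 3*c) * (u X) + (ω ^ 4*c) * (u 1) = 0 := by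
    have h := hE (X ^ 5)
    rw [hD5, hφ] at h
    have hp1 : (C a * X ^ 2 + C b * X + C c) * (C (1 + q⁻¹ + q⁻¹ ^ 2 + q⁻¹ ^ 3 + q⁻¹ ^ 4) * X ^ 4 + C (-q⁻¹*ω - 2*q⁻¹ ^ 2*ω - 3*q⁻¹ ^ 3*ω - 4*q⁻¹ ^ 4*ω) * X ^ 3 + C (q⁻¹ ^ 2*ω ^ 2 + 3*q⁻¹ ^ 3*ω ^ 2 + 6*q⁻¹ ^ 4*ω ^ 2) * X ^ 2 + C (-q⁻¹ ^ 3*ω ^ 3 - 4*q⁻¹ ^ 4*ω ^ 3) * X + C (q⁻¹ ^ 4*ω ^ 4)) = C (a + q⁻¹*a + q⁻¹ ^ 2*a + q⁻¹ ^ 3*a + q⁻¹ ^ 4*a) * X ^ 6 + C (b + q⁻¹*b - q⁻¹*ω*a + q⁻¹ ^ 2*b - 2*q⁻¹ ^ 2*ω*a + q⁻¹ ^ 3*b - 3*q⁻¹ ^ 3*ω*a + q⁻¹ ^ 4*b - 4*q⁻¹ ^ 4*ω*a) * X ^ 5 + C (c + q⁻¹*c - q⁻¹*ω*b + q⁻¹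 ^ 2*c - 2*q⁻¹ ^ 2*ω*b + q⁻¹ ^ 2*ω ^ 2*a + q⁻¹ ^ 3*c - 3*q⁻¹ ^ 3*ω*b + 3*q⁻¹ ^ 3*ω ^ 2*a + q⁻¹ ^ 4*c - 4*q⁻¹ ^ 4*ω*b + 6*q⁻¹ ^ 4*ω ^ 2*a) * X ^ 4 + C (-q⁻¹*ω*c - 2*q⁻¹ ^ 2*ω*c + q⁻¹ ^ 2*ω ^ 2*b - 3*q⁻¹ ^ 3*ω*c + 3*q⁻¹ ^ 3*ω ^ 2*b - q⁻¹ ^ 3*ω ^ 3*a - 4*q⁻¹ ^ 4*ω*c + 6*q⁻¹ ^ 4*ω ^ 2*b - 4*q⁻¹ ^ 4*ω ^ 3*a) * X ^ 3 + C (q⁻¹ ^ 2*ω ^ 2*c + 3*q⁻¹ ^ 3*ω ^ 2*c - q⁻¹ ^ 3*ω ^ 3*b + 6*q⁻¹ ^ 4*ω ^ 2*c - 4*q⁻¹ ^ 4*ω ^ 3*b + q⁻¹ ^ 4*ω ^ 4*a) * X ^ 2 + C (-q⁻¹ ^ 3*ω ^ 3*c - 4*q⁻¹ ^ 4*ω ^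 3*c + q⁻¹ ^ 4*ω ^ 4*b) * X + C (q⁻¹ ^ 4*ω ^ 4*c) := by
      simp only [div_eq_mul_inv, neg_mul, C_neg, C_mul, C_add, C_sub, C_1, C_pow, map_ofNat]
      ring
    have hp2 : ψ * X ^ 5 = C d * X ^ 6 + C e * X ^ 5 := by rw [hψ]; ring
    rw [hp1] at h
    rw [hp2] at h
    simp only [uAdd, uC, uCc] at h
    linear_combination (-q ^ 5) * h - (c*(u (X ^ 4)) + b*(u (X ^ 5)) + a*(u (X ^ 6)) - 4*ω*c*(u (X ^ 3)) - 4*ω*b*(u (X ^ 4)) - 4*ω*a*(u (X ^ 5)) + 6*ω ^ 2*c*(u (X ^ 2)) + 6*ω ^ 2*b*(u (X ^ 3)) + 6*ω ^ 2*a*(u (X ^ 4)) - 4*ω ^ 3*c*(u X) - 4*ω ^ 3*b*(u (X ^ 2)) - 4*ω ^ 3*a*(u (X ^ 3)) + ω ^ 4*c*(u 1) + ω ^ 4*b*(u X) + ω ^ 4*a*(u (X ^ 2)) + q*c*(u (X ^ 4)) + q*b*(u (X ^ 5)) + q*a*(u (X ^ 6)) - 3*q*ω*c*(u (X ^ 3))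 - 3*q*ω*b*(u (X ^ 4)) - 3*q*ω*a*(u (X ^ 5)) + 3*q*ω ^ 2*c*(u (X ^ 2)) + 3*q*ω ^ 2*b*(u (X ^ 3)) + 3*q*ω ^ 2*a*(u (X ^ 4)) - q*ω ^ 3*c*(u X) - q*ω ^ 3*b*(u (X ^ 2)) - q*ω ^ 3*a*(u (X ^ 3)) + q*q⁻¹*c*(u (X ^ 4)) + q*q⁻¹*b*(u (X ^ 5)) + q*q⁻¹*a*(u (X ^ 6)) - 4*q*q⁻¹*ω*c*(u (X ^ 3)) - 4*q*q⁻¹*ω*b*(u (X ^ 4)) - 4*q*q⁻¹*ω*a*(u (X ^ 5)) + 6*q*q⁻¹*ω ^ 2*c*(u (X ^ 2)) + 6*q*q⁻¹*ω ^ 2*b*(u (X ^ 3)) + 6*q*q⁻¹*ω ^ 2*a*(u (X ^ 4)) - 4*q*q⁻¹*ω ^ 3*c*(u X) - 4*q*q⁻¹*ω ^ 3*b*(u (X ^ 2)) - 4*q*q⁻¹*ω ^ 3*a*(u (X ^ 3)) + q*q⁻¹*ω ^ 4*c*(u 1) + q*q⁻¹*ω ^ 4*b*(u X) + q*q⁻¹*ω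 ^ 4*a*(u (X ^ 2)) + q ^ 2*c*(u (X ^ 4)) + q ^ 2*b*(u (X ^ 5)) + q ^ 2*a*(u (X ^ 6)) - 2*q ^ 2*ω*c*(u (X ^ 3)) - 2*q ^ 2*ω*b*(u (X ^ 4)) - 2*q ^ 2*ω*a*(u (X ^ 5)) + q ^ 2*ω ^ 2*c*(u (X ^ 2)) + q ^ 2*ω ^ 2*b*(u (X ^ 3)) + q ^ 2*ω ^ 2*a*(u (X ^ 4)) + q ^ 2*q⁻¹*c*(u (X ^ 4)) + q ^ 2*q⁻¹*b*(u (X ^ 5)) + q ^ 2*q⁻¹*a*(u (X ^ 6)) - 3*q ^ 2*q⁻¹*ω*c*(u (X ^ 3)) - 3*q ^ 2*q⁻¹*ω*b*(u (X ^ 4)) - 3*q ^ 2*q⁻¹*ω*a*(u (X ^ 5)) + 3*q ^ 2*q⁻¹*ω ^ 2*c*(u (X ^ 2)) + 3*q ^ 2*q⁻¹*ω ^ 2*b*(u (X ^ 3)) + 3*q ^ 2*q⁻¹*ω ^ 2*a*(u (X ^ 4)) - q ^ 2*q⁻¹*ω ^ 3*c*(u X) - q ^ 2*q⁻¹*ω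 ^ 3*b*(u (X ^ 2)) - q ^ 2*q⁻¹*ω ^ 3*a*(u (X ^ 3)) + q ^ 2*q⁻¹ ^ 2*c*(u (X ^ 4)) + q ^ 2*q⁻¹ ^ 2*b*(u (X ^ 5)) + q ^ 2*q⁻¹ ^ 2*a*(u (X ^ 6)) - 4*q ^ 2*q⁻¹ ^ 2*ω*c*(u (X ^ 3)) - 4*q ^ 2*q⁻¹ ^ 2*ω*b*(u (X ^ 4)) - 4*q ^ 2*q⁻¹ ^ 2*ω*a*(u (X ^ 5)) + 6*q ^ 2*q⁻¹ ^ 2*ω ^ 2*c*(u (X ^ 2)) + 6*q ^ 2*q⁻¹ ^ 2*ω ^ 2*b*(u (X ^ 3)) + 6*q ^ 2*q⁻¹ ^ 2*ω ^ 2*a*(u (X ^ 4)) - 4*q ^ 2*q⁻¹ ^ 2*ω ^ 3*c*(u X) - 4*q ^ 2*q⁻¹ ^ 2*ω ^ 3*b*(u (X ^ 2)) - 4*q ^ 2*q⁻¹ ^ 2*ω ^ 3*a*(u (X ^ 3)) + q ^ 2*q⁻¹ ^ 2*ω ^ 4*c*(u 1) + q ^ 2*q⁻¹ ^ 2*ω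 ^ 4*b*(u X) + q ^ 2*q⁻¹ ^ 2*ω ^ 4*a*(u (X ^ 2)) + q ^ 3*c*(u (X ^ 4)) + q ^ 3*b*(u (X ^ 5)) + q ^ 3*a*(u (X ^ 6)) - q ^ 3*ω*c*(u (X ^ 3)) - q ^ 3*ω*b*(u (X ^ 4)) - q ^ 3*ω*a*(u (X ^ 5)) + q ^ 3*q⁻¹*c*(u (X ^ 4)) + q ^ 3*q⁻¹*b*(u (X ^ 5)) + q ^ 3*q⁻¹*a*(u (X ^ 6)) - 2*q ^ 3*q⁻¹*ω*c*(u (X ^ 3)) - 2*q ^ 3*q⁻¹*ω*b*(u (X ^ 4)) - 2*q ^ 3*q⁻¹*ω*a*(u (X ^ 5)) + q ^ 3*q⁻¹*ω ^ 2*c*(u (X ^ 2)) + q ^ 3*q⁻¹*ω ^ 2*b*(u (X ^ 3)) + q ^ 3*q⁻¹*ω ^ 2*a*(u (X ^ 4)) + q ^ 3*q⁻¹ ^ 2*c*(u (X ^ 4)) + q ^ 3*q⁻¹ ^ 2*b*(u (X ^ 5)) + q ^ 3*q⁻¹ ^ 2*a*(u (X ^ 6)) - 3*q ^ 3*q⁻¹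 ^ 2*ω*c*(u (X ^ 3)) - 3*q ^ 3*q⁻¹ ^ 2*ω*b*(u (X ^ 4)) - 3*q ^ 3*q⁻¹ ^ 2*ω*a*(u (X ^ 5)) + 3*q ^ 3*q⁻¹ ^ 2*ω ^ 2*c*(u (X ^ 2)) + 3*q ^ 3*q⁻¹ ^ 2*ω ^ 2*b*(u (X ^ 3)) + 3*q ^ 3*q⁻¹ ^ 2*ω ^ 2*a*(u (X ^ 4)) - q ^ 3*q⁻¹ ^ 2*ω ^ 3*c*(u X) - q ^ 3*q⁻¹ ^ 2*ω ^ 3*b*(u (X ^ 2)) - q ^ 3*q⁻¹ ^ 2*ω ^ 3*a*(u (X ^ 3)) + q ^ 3*q⁻¹ ^ 3*c*(u (X ^ 4)) + q ^ 3*q⁻¹ ^ 3*b*(u (X ^ 5)) + q ^ 3*q⁻¹ ^ 3*a*(u (X ^ 6)) - 4*q ^ 3*q⁻¹ ^ 3*ω*c*(u (X ^ 3)) - 4*q ^ 3*q⁻¹ ^ 3*ω*b*(u (X ^ 4)) - 4*q ^ 3*q⁻¹ ^ 3*ω*a*(u (X ^ 5)) + 6*q ^ 3*q⁻¹ ^ 3*ω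 ^ 2*c*(u (X ^ 2)) + 6*q ^ 3*q⁻¹ ^ 3*ω ^ 2*b*(u (X ^ 3)) + 6*q ^ 3*q⁻¹ ^ 3*ω ^ 2*a*(u (X ^ 4)) - 4*q ^ 3*q⁻¹ ^ 3*ω ^ 3*c*(u X) - 4*q ^ 3*q⁻¹ ^ 3*ω ^ 3*b*(u (X ^ 2)) - 4*q ^ 3*q⁻¹ ^ 3*ω ^ 3*a*(u (X ^ 3)) + q ^ 3*q⁻¹ ^ 3*ω ^ 4*c*(u 1) + q ^ 3*q⁻¹ ^ 3*ω ^ 4*b*(u X) + q ^ 3*q⁻¹ ^ 3*ω ^ 4*a*(u (X ^ 2)) + q ^ 4*c*(u (X ^ 4)) + q ^ 4*b*(u (X ^ 5)) + q ^ 4*a*(u (X ^ 6)) + q ^ 4*q⁻¹*c*(u (X ^ 4)) + q ^ 4*q⁻¹*b*(u (X ^ 5)) + q ^ 4*q⁻¹*a*(u (X ^ 6)) - q ^ 4*q⁻¹*ω*c*(u (X ^ 3)) - q ^ 4*q⁻¹*ω*b*(u (X ^ 4)) - q ^ 4*q⁻¹*ω*a*(u (X ^ 5)) + q ^ 4*q⁻¹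 ^ 2*c*(u (X ^ 4)) + q ^ 4*q⁻¹ ^ 2*b*(u (X ^ 5)) + q ^ 4*q⁻¹ ^ 2*a*(u (X ^ 6)) - 2*q ^ 4*q⁻¹ ^ 2*ω*c*(u (X ^ 3)) - 2*q ^ 4*q⁻¹ ^ 2*ω*b*(u (X ^ 4)) - 2*q ^ 4*q⁻¹ ^ 2*ω*a*(u (X ^ 5)) + q ^ 4*q⁻¹ ^ 2*ω ^ 2*c*(u (X ^ 2)) + q ^ 4*q⁻¹ ^ 2*ω ^ 2*b*(u (X ^ 3)) + q ^ 4*q⁻¹ ^ 2*ω ^ 2*a*(u (X ^ 4)) + q ^ 4*q⁻¹ ^ 3*c*(u (X ^ 4)) + q ^ 4*q⁻¹ ^ 3*b*(u (X ^ 5)) + q ^ 4*q⁻¹ ^ 3*a*(u (X ^ 6)) - 3*q ^ 4*q⁻¹ ^ 3*ω*c*(u (X ^ 3)) - 3*q ^ 4*q⁻¹ ^ 3*ω*b*(u (X ^ 4)) - 3*q ^ 4*q⁻¹ ^ 3*ω*a*(u (X ^ 5)) + 3*q ^ 4*q⁻¹ ^ 3*ω ^ 2*c*(u (X ^ 2))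 + 3*q ^ 4*q⁻¹ ^ 3*ω ^ 2*b*(u (X ^ 3)) + 3*q ^ 4*q⁻¹ ^ 3*ω ^ 2*a*(u (X ^ 4)) - q ^ 4*q⁻¹ ^ 3*ω ^ 3*c*(u X) - q ^ 4*q⁻¹ ^ 3*ω ^ 3*b*(u (X ^ 2)) - q ^ 4*q⁻¹ ^ 3*ω ^ 3*a*(u (X ^ 3)) + q ^ 4*q⁻¹ ^ 4*c*(u (X ^ 4)) + q ^ 4*q⁻¹ ^ 4*b*(u (X ^ 5)) + q ^ 4*q⁻¹ ^ 4*a*(u (X ^ 6)) - 4*q ^ 4*q⁻¹ ^ 4*ω*c*(u (X ^ 3)) - 4*q ^ 4*q⁻¹ ^ 4*ω*b*(u (X ^ 4)) - 4*q ^ 4*q⁻¹ ^ 4*ω*a*(u (X ^ 5)) + 6*q ^ 4*q⁻¹ ^ 4*ω ^ 2*c*(u (X ^ 2)) + 6*q ^ 4*q⁻¹ ^ 4*ω ^ 2*b*(u (X ^ 3)) + 6*q ^ 4*q⁻¹ ^ 4*ω ^ 2*a*(u (X ^ 4)) - 4*q ^ 4*q⁻¹ ^ 4*ω ^ 3*c*(u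 X) - 4*q ^ 4*q⁻¹ ^ 4*ω ^ 3*b*(u (X ^ 2)) - 4*q ^ 4*q⁻¹ ^ 4*ω ^ 3*a*(u (X ^ 3)) + q ^ 4*q⁻¹ ^ 4*ω ^ 4*c*(u 1) + q ^ 4*q⁻¹ ^ 4*ω ^ 4*b*(u X) + q ^ 4*q⁻¹ ^ 4*ω ^ 4*a*(u (X ^ 2))) * hqq

  have hm0 : P 0 = 1 := by
    have h0 := (hPmon 0).1
    exact h0.natDegree_eq_zero.mp (hPmon 0).2
  have hM0 : u 1 ≠ 0 := by
    have h := hPne 0; rwa [hm0, one_pow] at h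
  have hP1 : P 1 = X + C ((P 1).coeff 0) := (hPmon 1).1.eq_X_add_C (hPmon 1).2
  set p : ℂ := (P 1).coeff 0 with hpdef
  have hP2 : P 2 = X^2 + C ((P 2).coeff 1) * X + C ((P 2).coeff 0) :=
    monicShape2 (hPmon 2).1 (hPmon 2).2
  set s : ℂ := (P 2).coeff 1 with hsdef
  set t : ℂ := (P 2).coeff 0 with htdef
  have hP3 : P 3 = X^3 + C ((P 3).coeff 2) * X^2 + C ((P 3).coeff 1) * X + C ((P 3).coeff 0) :=
    monicShape3 (hPmon 3).1 (hPmon 3).2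
  set r2 : ℂ := (P 3).coeff 2 with hr2def
  set r1 : ℂ := (P 3).coeff 1 with hr1def
  set r0 : ℂ := (P 3).coeff 0 with hr0def
  have hu1 : u (P 1) = 0 := by
    have h := hPorth 0 1 (by norm_num); rwa [hm0, one_mul] at h
  have hu2 : u (P 2) = 0 := by
    have h := hPorth 0 2 (by norm_num); rwa [hm0, one_mul] at h
  have hu3 : u (P 3) = 0 := by
    have h := hPorth 0 3 (by norm_num); rwa [hm0, one_mul] at h
  have hXP2 : u (X * P 2) = 0 := by
    have h12 := hPorth 1 2 (by norm_num)
    have hx : X * P 2 = P 1 * P 2 - C p * P 2 := by rw [hP1]; ring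
    rw [hx, map_sub, uC, h12, hu2]; ring
  have hXP3 : u (X * P 3) = 0 := by
    have h13 := hPorth 1 3 (by norm_num)
    have hx : X * P 3 = P 1 * P 3 - C p * P 3 := by rw [hP1]; ring
    rw [hx, map_sub, uC, h13, hu3]; ring
  have hX2P3 : u (X ^ 2 * P 3) = 0 := by
    have h23 := hPorth 2 3 (by norm_num)
    have hx : X ^ 2 * P 3 = P 2 * P 3 - C s * (X * P 3) - C t * P 3 := by rw [hP2]; ring
    rw [hx, map_sub, map_sub, uC, uC, h23, hXP3, hu3]; ring
  have hq1e : u X + p * u 1 = 0 := by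
    have h := hu1; rw [hP1] at h
    simp only [map_add, uCc] at h
    linear_combination h
  have hP1sq : u (P 1 ^ 2) = u (X ^ 2) + 2 * p * u X + p ^ 2 * u 1 := by
    have hx : P 1 ^ 2 = X ^ 2 + C (2 * p) * X + C (p ^ 2) := by
      rw [hP1]; simp only [C_mul, C_pow, map_ofNat]; ring
    rw [hx]; simp only [uAdd, uC, uCc]; try ring
  have hS1 : u (X ^ 2) + s * u X + t * u 1 = 0 := by
    have h := hu2; rw [hP2] at h
    simp only [uAdd, uC, uCc] at h
    linear_combination h
  have hS2 : u (X ^ 3) + s * u (X ^ 2) + t * u X = 0 := by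
    have hx : X * P 2 = X ^ 3 + C s * X ^ 2 + C t * X := by rw [hP2]; ring
    have h := hXP2; rw [hx] at h
    simp only [uAdd, uC] at h
    linear_combination h
  have hP2sq : u (P 2 ^ 2) = u (X ^ 4) + s * u (X ^ 3) + t * u (X ^ 2) := by
    have hx2 : X ^ 2 * P 2 = P 2 ^ 2 - C s * (X * P 2) - C t * P 2 := by rw [hP2]; ring
    have hx3 : X ^ 2 * P 2 = X ^ 4 + C s * X ^ 3 + C t * X ^ 2 := by rw [hP2]; ring
    have h1 : u (X ^ 2 * P 2) = u (P 2 ^ 2) := by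
      rw [hx2, map_sub, map_sub, uC, uC, hXP2, hu2]; ring
    rw [hx3] at h1
    simp only [uAdd, uC] at h1
    linear_combination -h1
  have hT0 : u (X ^ 3) + r2 * u (X ^ 2) + r1 * u X + r0 * u 1 = 0 := by
    have h := hu3; rw [hP3] at h
    simp only [uAdd, uC, uCc] at h
    linear_combination h
  have hT1 : u (X ^ 4) + r2 * u (X ^ 3) + r1 * u (X ^ 2) + r0 * u X = 0 := by
    have hx : X * P 3 = X ^ 4 + C r2 * X ^ 3 + C r1 * X ^ 2 + C r0 * X := by rw [hP3]; ring
    have h := hXP3; rw [hx] at h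
    simp only [uAdd, uC] at h
    linear_combination h
  have hT2 : u (X ^ 5) + r2 * u (X ^ 4) + r1 * u (X ^ 3) + r0 * u (X ^ 2) = 0 := by
    have hx : X ^ 2 * P 3 = X ^ 5 + C r2 * X ^ 4 + C r1 * X ^ 3 + C r0 * X ^ 2 := by
      rw [hP3]; ring
    have h := hX2P3; rw [hx] at h
    simp only [uAdd, uC] at h
    linear_combination h
  have hT3 : u (X ^ 6) + r2 * u (X ^ 5) + r1 * u (X ^ 4) + r0 * u (X ^ 3) = u (P 3 ^ 2) := by
    have hx2 : X ^ 3 * P 3 = P 3 ^ 2 - C r2 * (X ^ 2 * P 3) - C r1 * (X * P 3) - C r0 * P 3 := by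
      rw [hP3]; ring
    have hx3 : X ^ 3 * P 3 = X ^ 6 + C r2 * X ^ 5 + C r1 * X ^ 4 + C r0 * X ^ 3 := by
      rw [hP3]; ring
    have h1 : u (X ^ 3 * P 3) = u (P 3 ^ 2) := by
      rw [hx2, map_sub, map_sub, map_sub, uC, uC, uC, hX2P3, hXP3, hu3]; ring
    rw [hx3] at h1
    simp only [uAdd, uC] at h1
    linear_combination h1
  have hd : d ≠ 0 := by
    intro hd0
    have he0 : e = 0 := by
      have h : e * u 1 = 0 := by linear_combination hf0 - (u X) * hd0
      rcases mul_eq_zero.mp h with h' | h'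
      · exact h'
      · exact absurd h' hM0
    have hE0 : a * (u (X ^ 2)) + b * (u X) + c * (u 1) = 0 := by
      linear_combination hf1 + (-q*(u (X ^ 2))) * hd0 + (-q*(u X)) * he0
    have hE1 : a * (u (X ^ 3)) + b * (u (X ^ 2)) + c * (u X) = 0 := by
      have h : (1 + q) * (a * (u (X ^ 3)) + b * (u (X ^ 2)) + c * (u X)) = 0 := by
        linear_combination hf2 + (ω) * hE0 + (-q ^ 2*(u (X ^ 3))) * hd0 + (-q ^ 2*(u (X ^ 2))) * he0
      rcases mul_eq_zero.mp h with h' | h'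
      · exact absurd h' h1q
      · exact h'
    have hE2 : a * (u (X ^ 4)) + b * (u (X ^ 3)) + c * (u (X ^ 2)) = 0 := by
      have h : (1 + q + q ^ 2) * (a * (u (X ^ 4)) + b * (u (X ^ 3)) + c * (u (X ^ 2))) = 0 := by
        linear_combination hf3 + (2*ω + q*ω) * hE1 + (-ω ^ 2) * hE0 + (-q ^ 3*(u (X ^ 4))) * hd0 + (-q ^ 3*(u (X ^ 3))) * he0
      rcases mul_eq_zero.mp h with h' | h'
      · exact absurd h' h2q
      · exact h'

    have ha : a = 0 := by
      have h : a * (u (X ^ 4) + s * u (X ^ 3) + t * u (X ^ 2)) = 0 := by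
        linear_combination hE2 + s * hE1 + t * hE0 - b * hS2 - c * hS1
      rcases mul_eq_zero.mp h with h' | h'
      · exact h'
      · exact absurd (hP2sq.trans h') (hPne 2)
    have hDelta1 : u 1 * u (X ^ 2) - (u X) ^ 2 ≠ 0 := by
      have hkey : u 1 * u (P 1 ^ 2) = u 1 * u (X ^ 2) - (u X) ^ 2 := by
        rw [hP1sq]; linear_combination (u X + p * u 1) * hq1e
      intro hz
      exact (mul_ne_zero hM0 (hPne 1)) (hkey.trans hz)
    have hb : b = 0 := by
      have h : b * (u 1 * u (X ^ 2) - (u X) ^ 2) = 0 := by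
        linear_combination (u 1) * hE1 - (u X) * hE0 - (u 1 * u (X ^ 3) - u X * u (X ^ 2)) * ha
      rcases mul_eq_zero.mp h with h' | h'
      · exact h'
      · exact absurd h' hDelta1
    have hcc : c = 0 := by
      have h : c * u 1 = 0 := by linear_combination hE0 - (u (X ^ 2)) * ha - (u X) * hb
      rcases mul_eq_zero.mp h with h' | h'
      · exact h'
      · exact absurd h' hM0
    rcases hne with h | h
    · exact h (by rw [hφ, ha, hb, hcc]; simp)
    · exact h (by rw [hψ, hd0, he0]; simp)
  have scne0 : d ^ 2 * q * u 1 ≠ 0 := mul_ne_zero (mul_ne_zero (pow_ne_zero _ hd) hq0) hM0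
  have scne1 : d ^ 3 * q ^ 2 * (1 + q) * u 1 ≠ 0 :=
    mul_ne_zero (mul_ne_zero (mul_ne_zero (pow_ne_zero _ hd) (pow_ne_zero _ hq0)) h1q) hM0
  have scne2 : d ^ 4 * q ^ 3 * (1 + q) * (1 + q + q ^ 2) * u 1 ≠ 0 :=
    mul_ne_zero (mul_ne_zero (mul_ne_zero (mul_ne_zero (pow_ne_zero _ hd) (pow_ne_zero _ hq0)) h1q) h2q) hM0
  have scne3 : d ^ 5 * q ^ 4 * (1 + q) * (1 + q + q ^ 2) * (1 + q + q ^ 2 + q ^ 3) * u 1 ≠ 0 :=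
    mul_ne_zero (mul_ne_zero (mul_ne_zero (mul_ne_zero (mul_ne_zero (pow_ne_zero _ hd) (pow_ne_zero _ hq0)) h1q) h2q) h3q) hM0
  have hda : d * q + a ≠ 0 := by
    intro hB'
    have hSc0 : -(d ^ 2 * q * u 1) ≠ 0 := by
      simp only [neg_ne_zero]; exact scne0
    have hK0 : (-(d ^ 2 * q * u 1)) * ((q*d ^ 3) * (u (X ^ 3)) + (-b*d ^ 2 - q*b*d ^ 2 - q*ω*d ^ 3 - q ^ 2*d ^ 2*e) * (u (X ^ 2)) + (-b*d*e + b ^ 2*d + ω*b*d ^ 2 - q*d*e ^ 2 + q*b*d*e) * (u X) + (b ^ 2*e + ω*b*d*e + 2*q*b*e ^ 2 + q*ω*d*e ^ 2 + q ^ 2*e ^ 3) * (u 1)) = 0 := by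
      linear_combination (-q*c*d ^ 3*(u 1) - q*b ^ 2*d ^ 2*(u 1) - q*ω*b*d ^ 3*(u 1) - q ^ 2*c*d ^ 3*(u 1) - 2*q ^ 2*b*d ^ 2*e*(u 1) - q ^ 2*ω*d ^ 3*e*(u 1) - q ^ 3*d ^ 2*e ^ 2*(u 1)) * hf0 + (q*d ^ 3*e*(u 1) + q*ω*d ^ 4*(u 1) + q ^ 2*d ^ 3*e*(u 1)) * hf1 + (q*d ^ 4*(u 1)) * hf2 + (-q*d ^ 3*e*(u 1)*(u (X ^ 2)) - q*d ^ 4*(u 1)*(u (X ^ 3)) - q ^ 2*d ^ 3*e*(u 1)*(u (X ^ 2)) - q ^ 2*d ^ 4*(u 1)*(u (X ^ 3))) * hB'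
    have hK0' : (q*d ^ 3) * (u (X ^ 3)) + (-b*d ^ 2 - q*b*d ^ 2 - q*ω*d ^ 3 - q ^ 2*d ^ 2*e) * (u (X ^ 2)) + (-b*d*e + b ^ 2*d + ω*b*d ^ 2 - q*d*e ^ 2 + q*b*d*e) * (u X) + (b ^ 2*e + ω*b*d*e + 2*q*b*e ^ 2 + q*ω*d*e ^ 2 + q ^ 2*e ^ 3) * (u 1) = 0 := by
      rcases mul_eq_zero.mp hK0 with h | h
      · exact absurd h hSc0
      · exact h
    have hSc1 : (d ^ 3 * q ^ 2 * (1 + q) * u 1) ≠ 0 := scne1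
    have hK1 : ((d ^ 3 * q ^ 2 * (1 + q) * u 1)) * ((q*d ^ 3) * (u (X ^ 4)) + (-b*d ^ 2 - q*b*d ^ 2 - q*ω*d ^ 3 - q ^ 2*d ^ 2*e) * (u (X ^ 3)) + (-b*d*e + b ^ 2*d + ω*b*d ^ 2 - q*d*e ^ 2 + q*b*d*e) * (u (X ^ 2)) + (b ^ 2*e + ω*b*d*e + 2*q*b*e ^ 2 + q*ω*d*e ^ 2 + q ^ 2*e ^ 3) * (u X)) = 0 := by
      linear_combination (-q ^ 2*b*d ^ 4*(u (X ^ 2)) - q ^ 2*b*c*d ^ 3*(u 1) - q ^ 2*ω*c*d ^ 4*(u 1) - q ^ 3*d ^ 4*e*(u (X ^ 2)) - q ^ 3*c*d ^ 3*e*(u 1) - q ^ 3*b*d ^ 4*(u (X ^ 2)) - q ^ 3*b*c*d ^ 3*(u 1) - q ^ 4*d ^ 4*e*(u (X ^ 2)) - q ^ 4*c*d ^ 3*e*(u 1) - q ^ 4*b*d ^ 4*(u (X ^ 2)) - q ^ 5*d ^ 4*e*(u (X ^ 2))) * hf0 + (q ^ 2*d ^ 5*(u (X ^ 2)) + q ^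 2*b*d ^ 3*e*(u 1) + q ^ 2*ω*d ^ 4*e*(u 1) + q ^ 2*ω*b*d ^ 4*(u 1) + q ^ 3*d ^ 3*e ^ 2*(u 1) + q ^ 3*d ^ 5*(u (X ^ 2)) + q ^ 3*b*d ^ 3*e*(u 1) + q ^ 3*ω*d ^ 4*e*(u 1) + q ^ 4*d ^ 3*e ^ 2*(u 1) + q ^ 4*d ^ 5*(u (X ^ 2))) * hf1 + (q ^ 2*b*d ^ 4*(u 1) - q ^ 2*ω*d ^ 5*(u 1) + q ^ 3*d ^ 4*e*(u 1)) * hf2 + (-q ^ 2*d ^ 5*(u 1)) * hf3 + (-q ^ 2*d ^ 5*(u (X ^ 2)) ^ 2 + q ^ 2*d ^ 5*(u 1)*(u (X ^ 4)) - q ^ 2*b*d ^ 3*e*(u 1)*(u (X ^ 2)) - q ^ 2*b*d ^ 4*(u 1)*(u (X ^ 3)) - q ^ 2*ω*d ^ 4*e*(u 1)*(u (X ^ 2)) - q ^ 2*ω*d ^ 5*(u 1)*(u (X ^ 3)) - q ^ 3*d ^ 3*e ^ 2*(u 1)*(u (X ^ 2)) - q ^ 3*d ^ 4*e*(u 1)*(u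 (X ^ 3)) - q ^ 3*d ^ 5*(u (X ^ 2)) ^ 2 + q ^ 3*d ^ 5*(u 1)*(u (X ^ 4)) - q ^ 3*b*d ^ 3*e*(u 1)*(u (X ^ 2)) - q ^ 3*b*d ^ 4*(u 1)*(u (X ^ 3)) - q ^ 4*d ^ 3*e ^ 2*(u 1)*(u (X ^ 2)) - q ^ 4*d ^ 4*e*(u 1)*(u (X ^ 3)) - q ^ 4*d ^ 5*(u (X ^ 2)) ^ 2 + q ^ 4*d ^ 5*(u 1)*(u (X ^ 4))) * hB'
    have hK1' : (q*d ^ 3) * (u (X ^ 4)) + (-b*d ^ 2 - q*b*d ^ 2 - q*ω*d ^ 3 - q ^ 2*d ^ 2*e) * (u (X ^ 3)) + (-b*d*e + b ^ 2*d + ω*b*d ^ 2 - q*d*e ^ 2 + q*b*d*e) * (u (X ^ 2)) + (b ^ 2*e + ω*b*d*e + 2*q*b*e ^ 2 + q*ω*d*e ^ 2 + q ^ 2*e ^ 3) * (u X) = 0 := by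
      rcases mul_eq_zero.mp hK1 with h | h
      · exact absurd h hSc1
      · exact h
    have hSc2 : -(d ^ 4 * q ^ 3 * (1 + q) * (1 + q + q ^ 2) * u 1) ≠ 0 := by
      simp only [neg_ne_zero]; exact scne2
    have hK2 : (-(d ^ 4 * q ^ 3 * (1 + q) * (1 + q + q ^ 2) * u 1)) * ((q*d ^ 3) * (u (X ^ 5)) + (-b*d ^ 2 - q*b*d ^ 2 - q*ω*d ^ 3 - q ^ 2*d ^ 2*e) * (u (X ^ 4)) + (-b*d*e + b ^ 2*d + ω*b*d ^ 2 - q*d*e ^ 2 + q*b*d*e) * (u (X ^ 3)) + (b ^ 2*e + ω*b*d*e + 2*q*b*e ^ 2 + q*ω*d*e ^ 2 + q ^ 2*e ^ 3) * (u (X ^ 2))) = 0 := by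
      linear_combination (-q ^ 2*c ^ 2*d ^ 4*(u 1) + q ^ 2*b ^ 2*d ^ 4*(u (X ^ 2)) - 3*q ^ 3*c ^ 2*d ^ 4*(u 1) + q ^ 3*b*d ^ 4*e*(u (X ^ 2)) + 2*q ^ 3*b ^ 2*d ^ 4*(u (X ^ 2)) - q ^ 3*ω*c*d ^ 4*e*(u 1) - 4*q ^ 4*c ^ 2*d ^ 4*(u 1) + 2*q ^ 4*b*d ^ 4*e*(u (X ^ 2)) + 2*q ^ 4*b ^ 2*d ^ 4*(u (X ^ 2)) - 2*q ^ 4*ω*c*d ^ 4*e*(u 1) - q ^ 4*ω ^ 2*c*d ^ 5*(u 1) - 4*q ^ 5*c ^ 2*d ^ 4*(u 1) + 2*q ^ 5*b*d ^ 4*e*(u (X ^ 2)) + 2*q ^ 5*b ^ 2*d ^ 4*(u (X ^ 2)) - 2*q ^ 5*ω*c*d ^ 4*e*(u 1) + 2*q ^ 5*ω*b*d ^ 5*(u (X ^ 2)) - 3*q ^ 6*c ^ 2*d ^ 4*(u 1) + 2*q ^ 6*b*d ^ 4*e*(u (X ^ 2)) + 2*q ^ 6*b ^ 2*d ^ 4*(u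 (X ^ 2)) + 2*q ^ 6*ω*d ^ 5*e*(u (X ^ 2)) - 2*q ^ 6*ω*c*d ^ 4*e*(u 1) + 2*q ^ 6*ω*b*d ^ 5*(u (X ^ 2)) - q ^ 7*c ^ 2*d ^ 4*(u 1) + 3*q ^ 7*b*d ^ 4*e*(u (X ^ 2)) + q ^ 7*b ^ 2*d ^ 4*(u (X ^ 2)) + 2*q ^ 7*ω*d ^ 5*e*(u (X ^ 2)) - q ^ 7*ω*c*d ^ 4*e*(u 1) + q ^ 7*ω*b*d ^ 5*(u (X ^ 2)) + q ^ 8*d ^ 4*e ^ 2*(u (X ^ 2)) + 2*q ^ 8*b*d ^ 4*e*(u (X ^ 2)) + q ^ 8*ω*d ^ 5*e*(u (X ^ 2)) + q ^ 9*d ^ 4*e ^ 2*(u (X ^ 2))) * hf0 + (q ^ 2*c*d ^ 4*e*(u 1) - q ^ 2*b*d ^ 5*(u (X ^ 2)) + q ^ 2*ω*c*d ^ 5*(u 1) - q ^ 2*ω*b*d ^ 4*e*(u 1) + 3*q ^ 3*c*d ^ 4*e*(u 1) - 2*q ^ 3*b*d ^ 5*(u (X ^ 2)) + 2*q ^ 3*ω*c*d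 ^ 5*(u 1) - 2*q ^ 3*ω*b*d ^ 4*e*(u 1) - q ^ 3*ω ^ 2*b*d ^ 5*(u 1) + 4*q ^ 4*c*d ^ 4*e*(u 1) - 2*q ^ 4*b*d ^ 5*(u (X ^ 2)) + 2*q ^ 4*ω*c*d ^ 5*(u 1) - 2*q ^ 4*ω*b*d ^ 4*e*(u 1) + 4*q ^ 5*c*d ^ 4*e*(u 1) - 2*q ^ 5*b*d ^ 5*(u (X ^ 2)) - 2*q ^ 5*ω*d ^ 6*(u (X ^ 2)) + 2*q ^ 5*ω*c*d ^ 5*(u 1) - 2*q ^ 5*ω*b*d ^ 4*e*(u 1) + 3*q ^ 6*c*d ^ 4*e*(u 1) - 2*q ^ 6*b*d ^ 5*(u (X ^ 2)) - 2*q ^ 6*ω*d ^ 6*(u (X ^ 2)) + q ^ 6*ω*c*d ^ 5*(u 1) - q ^ 6*ω*b*d ^ 4*e*(u 1) - q ^ 7*d ^ 5*e*(u (X ^ 2)) + q ^ 7*c*d ^ 4*e*(u 1) - q ^ 7*b*d ^ 5*(u (X ^ 2)) - q ^ 7*ω*d ^ 6*(u (X ^ 2)) - q ^ 8*d ^ 5*e*(u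 (X ^ 2))) * hf1 + (q ^ 2*c*d ^ 5*(u 1) - q ^ 2*b*d ^ 4*e*(u 1) - q ^ 3*d ^ 4*e ^ 2*(u 1) + 2*q ^ 3*c*d ^ 5*(u 1) - 2*q ^ 3*b*d ^ 4*e*(u 1) - 2*q ^ 3*ω*b*d ^ 5*(u 1) + q ^ 3*ω ^ 2*d ^ 6*(u 1) - 2*q ^ 4*d ^ 4*e ^ 2*(u 1) + 2*q ^ 4*c*d ^ 5*(u 1) - 2*q ^ 4*b*d ^ 4*e*(u 1) - 2*q ^ 4*ω*d ^ 5*e*(u 1) - q ^ 4*ω*b*d ^ 5*(u 1) - 2*q ^ 5*d ^ 4*e ^ 2*(u 1) + 2*q ^ 5*c*d ^ 5*(u 1) - 2*q ^ 5*b*d ^ 4*e*(u 1) - q ^ 5*ω*d ^ 5*e*(u 1) - 2*q ^ 6*d ^ 4*e ^ 2*(u 1) + q ^ 6*c*d ^ 5*(u 1) - q ^ 6*b*d ^ 4*e*(u 1) - q ^ 7*d ^ 4*e ^ 2*(u 1)) * hf2 + (-q ^ 3*b*d ^ 5*(u 1) + 2*q ^ 3*ω*d ^ 6*(u 1) - q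 ^ 4*d ^ 5*e*(u 1) - q ^ 4*b*d ^ 5*(u 1) + q ^ 4*ω*d ^ 6*(u 1) - q ^ 5*d ^ 5*e*(u 1)) * hf3 + (q ^ 3*d ^ 6*(u 1) + q ^ 4*d ^ 6*(u 1)) * hf4 + (-q ^ 2*c*d ^ 4*e*(u 1)*(u (X ^ 2)) - q ^ 2*c*d ^ 5*(u 1)*(u (X ^ 3)) + q ^ 2*b*d ^ 4*e*(u 1)*(u (X ^ 3)) + q ^ 2*b*d ^ 5*(u (X ^ 2)) ^ 2 + q ^ 3*d ^ 4*e ^ 2*(u 1)*(u (X ^ 3)) - q ^ 3*d ^ 6*(u 1)*(u (X ^ 5)) - 3*q ^ 3*c*d ^ 4*e*(u 1)*(u (X ^ 2)) - 3*q ^ 3*c*d ^ 5*(u 1)*(u (X ^ 3)) + 3*q ^ 3*b*d ^ 4*e*(u 1)*(u (X ^ 3)) + 2*q ^ 3*b*d ^ 5*(u (X ^ 2)) ^ 2 + q ^ 3*b*d ^ 5*(u 1)*(u (X ^ 4)) - q ^ 3*ω*d ^ 4*e ^ 2*(u 1)*(u (X ^ 2)) + q ^ 3*ω*d ^ 6*(u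 1)*(u (X ^ 4)) + 3*q ^ 4*d ^ 4*e ^ 2*(u 1)*(u (X ^ 3)) + q ^ 4*d ^ 5*e*(u 1)*(u (X ^ 4)) - 2*q ^ 4*d ^ 6*(u 1)*(u (X ^ 5)) - 4*q ^ 4*c*d ^ 4*e*(u 1)*(u (X ^ 2)) - 4*q ^ 4*c*d ^ 5*(u 1)*(u (X ^ 3)) + 4*q ^ 4*b*d ^ 4*e*(u 1)*(u (X ^ 3)) + 2*q ^ 4*b*d ^ 5*(u (X ^ 2)) ^ 2 + 2*q ^ 4*b*d ^ 5*(u 1)*(u (X ^ 4)) - 2*q ^ 4*ω*d ^ 4*e ^ 2*(u 1)*(u (X ^ 2)) + 2*q ^ 4*ω*d ^ 6*(u 1)*(u (X ^ 4)) - q ^ 4*ω ^ 2*d ^ 5*e*(u 1)*(u (X ^ 2)) - q ^ 4*ω ^ 2*d ^ 6*(u 1)*(u (X ^ 3)) + 4*q ^ 5*d ^ 4*e ^ 2*(u 1)*(u (X ^ 3)) + 2*q ^ 5*d ^ 5*e*(u 1)*(u (X ^ 4)) - 2*q ^ 5*d ^ 6*(u 1)*(u (X ^ 5)) - 4*q ^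 5*c*d ^ 4*e*(u 1)*(u (X ^ 2)) - 4*q ^ 5*c*d ^ 5*(u 1)*(u (X ^ 3)) + 4*q ^ 5*b*d ^ 4*e*(u 1)*(u (X ^ 3)) + 2*q ^ 5*b*d ^ 5*(u (X ^ 2)) ^ 2 + 2*q ^ 5*b*d ^ 5*(u 1)*(u (X ^ 4)) - 2*q ^ 5*ω*d ^ 4*e ^ 2*(u 1)*(u (X ^ 2)) + 2*q ^ 5*ω*d ^ 6*(u (X ^ 2)) ^ 2 + 4*q ^ 6*d ^ 4*e ^ 2*(u 1)*(u (X ^ 3)) + 2*q ^ 6*d ^ 5*e*(u 1)*(u (X ^ 4)) - 2*q ^ 6*d ^ 6*(u 1)*(u (X ^ 5)) - 3*q ^ 6*c*d ^ 4*e*(u 1)*(u (X ^ 2)) - 3*q ^ 6*c*d ^ 5*(u 1)*(u (X ^ 3)) + 3*q ^ 6*b*d ^ 4*e*(u 1)*(u (X ^ 3)) + 2*q ^ 6*b*d ^ 5*(u (X ^ 2)) ^ 2 + q ^ 6*b*d ^ 5*(u 1)*(u (X ^ 4)) - 2*q ^ 6*ω*d ^ 4*e ^ 2*(u 1)*(u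 (X ^ 2)) + 2*q ^ 6*ω*d ^ 6*(u (X ^ 2)) ^ 2 + 3*q ^ 7*d ^ 4*e ^ 2*(u 1)*(u (X ^ 3)) + q ^ 7*d ^ 5*e*(u (X ^ 2)) ^ 2 + q ^ 7*d ^ 5*e*(u 1)*(u (X ^ 4)) - q ^ 7*d ^ 6*(u 1)*(u (X ^ 5)) - q ^ 7*c*d ^ 4*e*(u 1)*(u (X ^ 2)) - q ^ 7*c*d ^ 5*(u 1)*(u (X ^ 3)) + q ^ 7*b*d ^ 4*e*(u 1)*(u (X ^ 3)) + q ^ 7*b*d ^ 5*(u (X ^ 2)) ^ 2 - q ^ 7*ω*d ^ 4*e ^ 2*(u 1)*(u (X ^ 2)) + q ^ 7*ω*d ^ 6*(u (X ^ 2)) ^ 2 + q ^ 8*d ^ 4*e ^ 2*(u 1)*(u (X ^ 3)) + q ^ 8*d ^ 5*e*(u (X ^ 2)) ^ 2) * hB'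
    have hK2' : (q*d ^ 3) * (u (X ^ 5)) + (-b*d ^ 2 - q*b*d ^ 2 - q*ω*d ^ 3 - q ^ 2*d ^ 2*e) * (u (X ^ 4)) + (-b*d*e + b ^ 2*d + ω*b*d ^ 2 - q*d*e ^ 2 + q*b*d*e) * (u (X ^ 3)) + (b ^ 2*e + ω*b*d*e + 2*q*b*e ^ 2 + q*ω*d*e ^ 2 + q ^ 2*e ^ 3) * (u (X ^ 2)) = 0 := by
      rcases mul_eq_zero.mp hK2 with h | h
      · exact absurd h hSc2
      · exact h
    have hSc3 : (d ^ 5 * q ^ 4 * (1 + q) * (1 + q + q ^ 2) * (1 + q + q ^ 2 + q ^ 3) * u 1) ≠ 0 := scne3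
    have hK3 : ((d ^ 5 * q ^ 4 * (1 + q) * (1 + q + q ^ 2) * (1 + q + q ^ 2 + q ^ 3) * u 1)) * ((q*d ^ 3) * (u (X ^ 6)) + (-b*d ^ 2 - q*b*d ^ 2 - q*ω*d ^ 3 - q ^ 2*d ^ 2*e) * (u (X ^ 5)) + (-b*d*e + b ^ 2*d + ω*b*d ^ 2 - q*d*e ^ 2 + q*b*d*e) * (u (X ^ 4)) + (b ^ 2*e + ω*b*d*e + 2*q*b*e ^ 2 + q*ω*d*e ^ 2 + q ^ 2*e ^ 3) * (u (X ^ 3))) = 0 := by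
      linear_combination (q ^ 2*b*c ^ 2*d ^ 4*(u 1) - q ^ 2*b ^ 3*d ^ 4*(u (X ^ 2)) - q ^ 3*b*c*d ^ 5*(u (X ^ 2)) + 3*q ^ 3*b*c ^ 2*d ^ 4*(u 1) - q ^ 3*b ^ 2*d ^ 4*e*(u (X ^ 2)) - 3*q ^ 3*b ^ 3*d ^ 4*(u (X ^ 2)) - q ^ 3*ω*c ^ 2*d ^ 5*(u 1) + q ^ 3*ω*b*c*d ^ 4*e*(u 1) - q ^ 4*c*d ^ 5*e*(u (X ^ 2)) - q ^ 4*c ^ 2*d ^ 4*e*(u 1) - 3*q ^ 4*b*c*d ^ 5*(u (X ^ 2)) + 5*q ^ 4*b*c ^ 2*d ^ 4*(u 1) - 3*q ^ 4*b ^ 2*d ^ 4*e*(u (X ^ 2)) - 5*q ^ 4*b ^ 3*d ^ 4*(u (X ^ 2)) - 2*q ^ 4*ω*c ^ 2*d ^ 5*(u 1) + 2*q ^ 4*ω*b*c*d ^ 4*e*(u 1) - 3*q ^ 5*c*d ^ 5*e*(u (X ^ 2)) - 3*q ^ 5*c ^ 2*d ^ 4*e*(u 1) - 6*q ^ 5*b*c*d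 ^ 5*(u (X ^ 2)) + 6*q ^ 5*b*c ^ 2*d ^ 4*(u 1) - 4*q ^ 5*b ^ 2*d ^ 4*e*(u (X ^ 2)) - 6*q ^ 5*b ^ 3*d ^ 4*(u (X ^ 2)) - q ^ 5*ω*c*d ^ 4*e ^ 2*(u 1) - 3*q ^ 5*ω*c ^ 2*d ^ 5*(u 1) + 3*q ^ 5*ω*b*c*d ^ 4*e*(u 1) + q ^ 5*ω ^ 3*c*d ^ 6*(u 1) - 6*q ^ 6*c*d ^ 5*e*(u (X ^ 2)) - 5*q ^ 6*c ^ 2*d ^ 4*e*(u 1) + 2*q ^ 6*b*d ^ 4*e ^ 2*(u (X ^ 2)) - 8*q ^ 6*b*c*d ^ 5*(u (X ^ 2)) + 6*q ^ 6*b*c ^ 2*d ^ 4*(u 1) - 4*q ^ 6*b ^ 2*d ^ 4*e*(u (X ^ 2)) - 6*q ^ 6*b ^ 3*d ^ 4*(u (X ^ 2)) - 2*q ^ 6*ω*c*d ^ 4*e ^ 2*(u 1) + 3*q ^ 6*ω*b*c*d ^ 4*e*(u 1) - 3*q ^ 6*ω*b ^ 2*d ^ 5*(u (X ^ 2)) -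 3*q ^ 6*ω ^ 2*b*d ^ 6*(u (X ^ 2)) + q ^ 7*d ^ 4*e ^ 3*(u (X ^ 2)) - 8*q ^ 7*c*d ^ 5*e*(u (X ^ 2)) - 6*q ^ 7*c ^ 2*d ^ 4*e*(u 1) + 4*q ^ 7*b*d ^ 4*e ^ 2*(u (X ^ 2)) - 9*q ^ 7*b*c*d ^ 5*(u (X ^ 2)) + 6*q ^ 7*b*c ^ 2*d ^ 4*(u 1) - 3*q ^ 7*b ^ 2*d ^ 4*e*(u (X ^ 2)) - 6*q ^ 7*b ^ 3*d ^ 4*(u (X ^ 2)) - 3*q ^ 7*ω*c*d ^ 4*e ^ 2*(u 1) + 6*q ^ 7*ω*c ^ 2*d ^ 5*(u 1) - 3*q ^ 7*ω*b*d ^ 5*e*(u (X ^ 2)) + 3*q ^ 7*ω*b*c*d ^ 4*e*(u 1) - 9*q ^ 7*ω*b ^ 2*d ^ 5*(u (X ^ 2)) - 3*q ^ 7*ω ^ 2*d ^ 6*e*(u (X ^ 2)) + 3*q ^ 7*ω ^ 2*c*d ^ 5*e*(u 1) - 6*q ^ 7*ω ^ 2*b*d ^ 6*(u (X ^ 2))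 - q ^ 7*ω ^ 3*c*d ^ 6*(u 1) + 2*q ^ 8*d ^ 4*e ^ 3*(u (X ^ 2)) - 9*q ^ 8*c*d ^ 5*e*(u (X ^ 2)) - 5*q ^ 8*c ^ 2*d ^ 4*e*(u 1) + 6*q ^ 8*b*d ^ 4*e ^ 2*(u (X ^ 2)) - 8*q ^ 8*b*c*d ^ 5*(u (X ^ 2)) + 6*q ^ 8*b*c ^ 2*d ^ 4*(u 1) - 4*q ^ 8*b ^ 2*d ^ 4*e*(u (X ^ 2)) - 6*q ^ 8*b ^ 3*d ^ 4*(u (X ^ 2)) - 3*q ^ 8*ω*c*d ^ 4*e ^ 2*(u 1) + 9*q ^ 8*ω*c ^ 2*d ^ 5*(u 1) - 12*q ^ 8*ω*b*d ^ 5*e*(u (X ^ 2)) + 3*q ^ 8*ω*b*c*d ^ 4*e*(u 1) - 12*q ^ 8*ω*b ^ 2*d ^ 5*(u (X ^ 2)) - 6*q ^ 8*ω ^ 2*d ^ 6*e*(u (X ^ 2)) + 6*q ^ 8*ω ^ 2*c*d ^ 5*e*(u 1) - 6*q ^ 8*ω ^ 2*b*d ^ 6*(u (X ^ 2)) + 3*q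 ^ 9*d ^ 4*e ^ 3*(u (X ^ 2)) - 8*q ^ 9*c*d ^ 5*e*(u (X ^ 2)) - 2*q ^ 9*c ^ 2*d ^ 4*e*(u 1) + 5*q ^ 9*b*d ^ 4*e ^ 2*(u (X ^ 2)) - 6*q ^ 9*b*c*d ^ 5*(u (X ^ 2)) + 5*q ^ 9*b*c ^ 2*d ^ 4*(u 1) - 7*q ^ 9*b ^ 2*d ^ 4*e*(u (X ^ 2)) - 5*q ^ 9*b ^ 3*d ^ 4*(u (X ^ 2)) - 3*q ^ 9*ω*d ^ 5*e ^ 2*(u (X ^ 2)) - 2*q ^ 9*ω*c*d ^ 4*e ^ 2*(u 1) + 7*q ^ 9*ω*c ^ 2*d ^ 5*(u 1) - 19*q ^ 9*ω*b*d ^ 5*e*(u (X ^ 2)) + 3*q ^ 9*ω*b*c*d ^ 4*e*(u 1) - 10*q ^ 9*ω*b ^ 2*d ^ 5*(u (X ^ 2)) - 6*q ^ 9*ω ^ 2*d ^ 6*e*(u (X ^ 2)) + 5*q ^ 9*ω ^ 2*c*d ^ 5*e*(u 1) - 5*q ^ 9*ω ^ 2*b*d ^ 6*(u (X ^ 2))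 + 3*q ^ 10*d ^ 4*e ^ 3*(u (X ^ 2)) - 6*q ^ 10*c*d ^ 5*e*(u (X ^ 2)) + q ^ 10*c ^ 2*d ^ 4*e*(u 1) + q ^ 10*b*d ^ 4*e ^ 2*(u (X ^ 2)) - 3*q ^ 10*b*c*d ^ 5*(u (X ^ 2)) + 3*q ^ 10*b*c ^ 2*d ^ 4*(u 1) - 9*q ^ 10*b ^ 2*d ^ 4*e*(u (X ^ 2)) - 3*q ^ 10*b ^ 3*d ^ 4*(u (X ^ 2)) - 7*q ^ 10*ω*d ^ 5*e ^ 2*(u (X ^ 2)) + 4*q ^ 10*ω*c ^ 2*d ^ 5*(u 1) - 17*q ^ 10*ω*b*d ^ 5*e*(u (X ^ 2)) + 2*q ^ 10*ω*b*c*d ^ 4*e*(u 1) - 6*q ^ 10*ω*b ^ 2*d ^ 5*(u (X ^ 2)) - 5*q ^ 10*ω ^ 2*d ^ 6*e*(u (X ^ 2)) + 3*q ^ 10*ω ^ 2*c*d ^ 5*e*(u 1) - 3*q ^ 10*ω ^ 2*b*d ^ 6*(u (X ^ 2)) + 2*q ^ 11*d ^ 4*e ^ 3*(u (X ^ 2))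 - 3*q ^ 11*c*d ^ 5*e*(u (X ^ 2)) + 2*q ^ 11*c ^ 2*d ^ 4*e*(u 1) - 4*q ^ 11*b*d ^ 4*e ^ 2*(u (X ^ 2)) - q ^ 11*b*c*d ^ 5*(u (X ^ 2)) + q ^ 11*b*c ^ 2*d ^ 4*(u 1) - 7*q ^ 11*b ^ 2*d ^ 4*e*(u (X ^ 2)) - q ^ 11*b ^ 3*d ^ 4*(u (X ^ 2)) - 7*q ^ 11*ω*d ^ 5*e ^ 2*(u (X ^ 2)) + q ^ 11*ω*c*d ^ 4*e ^ 2*(u 1) + q ^ 11*ω*c ^ 2*d ^ 5*(u 1) - 11*q ^ 11*ω*b*d ^ 5*e*(u (X ^ 2)) + q ^ 11*ω*b*c*d ^ 4*e*(u 1) - 2*q ^ 11*ω*b ^ 2*d ^ 5*(u (X ^ 2)) - 3*q ^ 11*ω ^ 2*d ^ 6*e*(u (X ^ 2)) + q ^ 11*ω ^ 2*c*d ^ 5*e*(u 1) - q ^ 11*ω ^ 2*b*d ^ 6*(u (X ^ 2)) - q ^ 12*c*d ^ 5*e*(u (X ^ 2)) + q ^ 12*c ^ 2*d ^ 4*e*(u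 1) - 5*q ^ 12*b*d ^ 4*e ^ 2*(u (X ^ 2)) - 3*q ^ 12*b ^ 2*d ^ 4*e*(u (X ^ 2)) - 5*q ^ 12*ω*d ^ 5*e ^ 2*(u (X ^ 2)) + q ^ 12*ω*c*d ^ 4*e ^ 2*(u 1) - 4*q ^ 12*ω*b*d ^ 5*e*(u (X ^ 2)) - q ^ 12*ω ^ 2*d ^ 6*e*(u (X ^ 2)) - q ^ 13*d ^ 4*e ^ 3*(u (X ^ 2)) - 3*q ^ 13*b*d ^ 4*e ^ 2*(u (X ^ 2)) - 2*q ^ 13*ω*d ^ 5*e ^ 2*(u (X ^ 2)) - q ^ 14*d ^ 4*e ^ 3*(u (X ^ 2))) * hf0 + (-q ^ 2*b*c*d ^ 4*e*(u 1) + q ^ 2*b ^ 2*d ^ 5*(u (X ^ 2)) - q ^ 2*ω*b*c*d ^ 5*(u 1) + q ^ 2*ω*b ^ 2*d ^ 4*e*(u 1) + q ^ 3*c*d ^ 6*(u (X ^ 2)) - 3*q ^ 3*b*c*d ^ 4*e*(u 1) + 3*q ^ 3*b ^ 2*d ^ 5*(u (X ^ 2)) + q ^ 3*ω*c*d ^ 5*e*(u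 1) - 2*q ^ 3*ω*b*c*d ^ 5*(u 1) + 2*q ^ 3*ω*b ^ 2*d ^ 4*e*(u 1) + q ^ 4*c*d ^ 4*e ^ 2*(u 1) + 3*q ^ 4*c*d ^ 6*(u (X ^ 2)) - 5*q ^ 4*b*c*d ^ 4*e*(u 1) + 5*q ^ 4*b ^ 2*d ^ 5*(u (X ^ 2)) + 3*q ^ 4*ω*c*d ^ 5*e*(u 1) - q ^ 4*ω*b*d ^ 4*e ^ 2*(u 1) - 3*q ^ 4*ω*b*c*d ^ 5*(u 1) + 3*q ^ 4*ω*b ^ 2*d ^ 4*e*(u 1) + q ^ 4*ω ^ 3*b*d ^ 6*(u 1) + 3*q ^ 5*c*d ^ 4*e ^ 2*(u 1) + 6*q ^ 5*c*d ^ 6*(u (X ^ 2)) - q ^ 5*b*d ^ 5*e*(u (X ^ 2)) - 6*q ^ 5*b*c*d ^ 4*e*(u 1) + 6*q ^ 5*b ^ 2*d ^ 5*(u (X ^ 2)) + 5*q ^ 5*ω*c*d ^ 5*e*(u 1) - 2*q ^ 5*ω*b*d ^ 4*e ^ 2*(u 1) - 3*q ^ 5*ω*b*c*d ^ 5*(u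 1) + 3*q ^ 5*ω*b ^ 2*d ^ 4*e*(u 1) - q ^ 6*d ^ 5*e ^ 2*(u (X ^ 2)) + 5*q ^ 6*c*d ^ 4*e ^ 2*(u 1) + 8*q ^ 6*c*d ^ 6*(u (X ^ 2)) - 2*q ^ 6*b*d ^ 5*e*(u (X ^ 2)) - 6*q ^ 6*b*c*d ^ 4*e*(u 1) + 6*q ^ 6*b ^ 2*d ^ 5*(u (X ^ 2)) + 3*q ^ 6*ω*c*d ^ 5*e*(u 1) - 3*q ^ 6*ω*b*d ^ 4*e ^ 2*(u 1) + 3*q ^ 6*ω*b*d ^ 6*(u (X ^ 2)) - 3*q ^ 6*ω*b*c*d ^ 5*(u 1) + 3*q ^ 6*ω*b ^ 2*d ^ 4*e*(u 1) + 3*q ^ 6*ω ^ 2*d ^ 7*(u (X ^ 2)) - 3*q ^ 6*ω ^ 2*c*d ^ 6*(u 1) + 3*q ^ 6*ω ^ 2*b*d ^ 5*e*(u 1) - q ^ 6*ω ^ 3*b*d ^ 6*(u 1) - 2*q ^ 7*d ^ 5*e ^ 2*(u (X ^ 2)) + 6*q ^ 7*c*d ^ 4*e ^ 2*(u 1) +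 9*q ^ 7*c*d ^ 6*(u (X ^ 2)) - 3*q ^ 7*b*d ^ 5*e*(u (X ^ 2)) - 6*q ^ 7*b*c*d ^ 4*e*(u 1) + 6*q ^ 7*b ^ 2*d ^ 5*(u (X ^ 2)) - 3*q ^ 7*ω*c*d ^ 5*e*(u 1) - 3*q ^ 7*ω*b*d ^ 4*e ^ 2*(u 1) + 9*q ^ 7*ω*b*d ^ 6*(u (X ^ 2)) - 3*q ^ 7*ω*b*c*d ^ 5*(u 1) + 3*q ^ 7*ω*b ^ 2*d ^ 4*e*(u 1) + 6*q ^ 7*ω ^ 2*d ^ 7*(u (X ^ 2)) - 6*q ^ 7*ω ^ 2*c*d ^ 6*(u 1) + 6*q ^ 7*ω ^ 2*b*d ^ 5*e*(u 1) - 3*q ^ 8*d ^ 5*e ^ 2*(u (X ^ 2)) + 5*q ^ 8*c*d ^ 4*e ^ 2*(u 1) + 8*q ^ 8*c*d ^ 6*(u (X ^ 2)) - 2*q ^ 8*b*d ^ 5*e*(u (X ^ 2)) - 6*q ^ 8*b*c*d ^ 4*e*(u 1) + 6*q ^ 8*b ^ 2*d ^ 5*(u (X ^ 2)) + 3*q ^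 8*ω*d ^ 6*e*(u (X ^ 2)) - 7*q ^ 8*ω*c*d ^ 5*e*(u 1) - 2*q ^ 8*ω*b*d ^ 4*e ^ 2*(u 1) + 12*q ^ 8*ω*b*d ^ 6*(u (X ^ 2)) - 3*q ^ 8*ω*b*c*d ^ 5*(u 1) + 3*q ^ 8*ω*b ^ 2*d ^ 4*e*(u 1) + 6*q ^ 8*ω ^ 2*d ^ 7*(u (X ^ 2)) - 5*q ^ 8*ω ^ 2*c*d ^ 6*(u 1) + 5*q ^ 8*ω ^ 2*b*d ^ 5*e*(u 1) - 3*q ^ 9*d ^ 5*e ^ 2*(u (X ^ 2)) + 2*q ^ 9*c*d ^ 4*e ^ 2*(u 1) + 6*q ^ 9*c*d ^ 6*(u (X ^ 2)) + q ^ 9*b*d ^ 5*e*(u (X ^ 2)) - 5*q ^ 9*b*c*d ^ 4*e*(u 1) + 5*q ^ 9*b ^ 2*d ^ 5*(u (X ^ 2)) + 7*q ^ 9*ω*d ^ 6*e*(u (X ^ 2)) - 7*q ^ 9*ω*c*d ^ 5*e*(u 1) + 10*q ^ 9*ω*b*d ^ 6*(u (X ^ 2)) - 2*q ^ 9*ω*b*c*d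 ^ 5*(u 1) + 2*q ^ 9*ω*b ^ 2*d ^ 4*e*(u 1) + 5*q ^ 9*ω ^ 2*d ^ 7*(u (X ^ 2)) - 3*q ^ 9*ω ^ 2*c*d ^ 6*(u 1) + 3*q ^ 9*ω ^ 2*b*d ^ 5*e*(u 1) - 2*q ^ 10*d ^ 5*e ^ 2*(u (X ^ 2)) - q ^ 10*c*d ^ 4*e ^ 2*(u 1) + 3*q ^ 10*c*d ^ 6*(u (X ^ 2)) + 4*q ^ 10*b*d ^ 5*e*(u (X ^ 2)) - 3*q ^ 10*b*c*d ^ 4*e*(u 1) + 3*q ^ 10*b ^ 2*d ^ 5*(u (X ^ 2)) + 7*q ^ 10*ω*d ^ 6*e*(u (X ^ 2)) - 5*q ^ 10*ω*c*d ^ 5*e*(u 1) + q ^ 10*ω*b*d ^ 4*e ^ 2*(u 1) + 6*q ^ 10*ω*b*d ^ 6*(u (X ^ 2)) - q ^ 10*ω*b*c*d ^ 5*(u 1) + q ^ 10*ω*b ^ 2*d ^ 4*e*(u 1) + 3*q ^ 10*ω ^ 2*d ^ 7*(u (X ^ 2)) - q ^ 10*ω ^ 2*c*d ^ 6*(u 1)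 + q ^ 10*ω ^ 2*b*d ^ 5*e*(u 1) - 2*q ^ 11*c*d ^ 4*e ^ 2*(u 1) + q ^ 11*c*d ^ 6*(u (X ^ 2)) + 4*q ^ 11*b*d ^ 5*e*(u (X ^ 2)) - q ^ 11*b*c*d ^ 4*e*(u 1) + q ^ 11*b ^ 2*d ^ 5*(u (X ^ 2)) + 5*q ^ 11*ω*d ^ 6*e*(u (X ^ 2)) - 2*q ^ 11*ω*c*d ^ 5*e*(u 1) + q ^ 11*ω*b*d ^ 4*e ^ 2*(u 1) + 2*q ^ 11*ω*b*d ^ 6*(u (X ^ 2)) + q ^ 11*ω ^ 2*d ^ 7*(u (X ^ 2)) + q ^ 12*d ^ 5*e ^ 2*(u (X ^ 2)) - q ^ 12*c*d ^ 4*e ^ 2*(u 1) + 2*q ^ 12*b*d ^ 5*e*(u (X ^ 2)) + 2*q ^ 12*ω*d ^ 6*e*(u (X ^ 2)) + q ^ 13*d ^ 5*e ^ 2*(u (X ^ 2))) * hf1 + (-q ^ 2*b*c*d ^ 5*(u 1) + q ^ 2*b ^ 2*d ^ 4*e*(u 1) + q ^ 3*b*d ^ 4*e ^ 2*(u 1)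 - 2*q ^ 3*b*c*d ^ 5*(u 1) + 2*q ^ 3*b ^ 2*d ^ 4*e*(u 1) - q ^ 3*ω*c*d ^ 6*(u 1) + q ^ 3*ω*b*d ^ 5*e*(u 1) + q ^ 4*c*d ^ 5*e*(u 1) + q ^ 4*b*d ^ 4*e ^ 2*(u 1) - 3*q ^ 4*b*c*d ^ 5*(u 1) + 3*q ^ 4*b ^ 2*d ^ 4*e*(u 1) + q ^ 4*ω*d ^ 5*e ^ 2*(u 1) - 2*q ^ 4*ω*c*d ^ 6*(u 1) + 2*q ^ 4*ω*b*d ^ 5*e*(u 1) + 3*q ^ 4*ω ^ 2*b*d ^ 6*(u 1) - q ^ 4*ω ^ 3*d ^ 7*(u 1) - q ^ 5*d ^ 4*e ^ 3*(u 1) + 2*q ^ 5*c*d ^ 5*e*(u 1) + q ^ 5*b*d ^ 4*e ^ 2*(u 1) - 3*q ^ 5*b*c*d ^ 5*(u 1) + 3*q ^ 5*b ^ 2*d ^ 4*e*(u 1) + 2*q ^ 5*ω*d ^ 5*e ^ 2*(u 1) - 3*q ^ 5*ω*c*d ^ 6*(u 1) + 3*q ^ 5*ω*b*d ^ 5*e*(u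 1) + 3*q ^ 5*ω ^ 2*d ^ 6*e*(u 1) + 3*q ^ 5*ω ^ 2*b*d ^ 6*(u 1) - 2*q ^ 6*d ^ 4*e ^ 3*(u 1) + 3*q ^ 6*c*d ^ 5*e*(u 1) - 3*q ^ 6*b*c*d ^ 5*(u 1) + 3*q ^ 6*b ^ 2*d ^ 4*e*(u 1) + 3*q ^ 6*ω*d ^ 5*e ^ 2*(u 1) - 6*q ^ 6*ω*c*d ^ 6*(u 1) + 6*q ^ 6*ω*b*d ^ 5*e*(u 1) + 3*q ^ 6*ω ^ 2*d ^ 6*e*(u 1) + q ^ 6*ω ^ 3*d ^ 7*(u 1) - 3*q ^ 7*d ^ 4*e ^ 3*(u 1) + 3*q ^ 7*c*d ^ 5*e*(u 1) - 3*q ^ 7*b*c*d ^ 5*(u 1) + 3*q ^ 7*b ^ 2*d ^ 4*e*(u 1) + 6*q ^ 7*ω*d ^ 5*e ^ 2*(u 1) - 9*q ^ 7*ω*c*d ^ 6*(u 1) + 9*q ^ 7*ω*b*d ^ 5*e*(u 1) - 3*q ^ 8*d ^ 4*e ^ 3*(u 1) + 2*q ^ 8*c*d ^ 5*e*(u 1)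 + q ^ 8*b*d ^ 4*e ^ 2*(u 1) - 3*q ^ 8*b*c*d ^ 5*(u 1) + 3*q ^ 8*b ^ 2*d ^ 4*e*(u 1) + 9*q ^ 8*ω*d ^ 5*e ^ 2*(u 1) - 7*q ^ 8*ω*c*d ^ 6*(u 1) + 7*q ^ 8*ω*b*d ^ 5*e*(u 1) - 2*q ^ 9*d ^ 4*e ^ 3*(u 1) + 3*q ^ 9*b*d ^ 4*e ^ 2*(u 1) - 2*q ^ 9*b*c*d ^ 5*(u 1) + 2*q ^ 9*b ^ 2*d ^ 4*e*(u 1) + 7*q ^ 9*ω*d ^ 5*e ^ 2*(u 1) - 4*q ^ 9*ω*c*d ^ 6*(u 1) + 4*q ^ 9*ω*b*d ^ 5*e*(u 1) - q ^ 10*c*d ^ 5*e*(u 1) + 3*q ^ 10*b*d ^ 4*e ^ 2*(u 1) - q ^ 10*b*c*d ^ 5*(u 1) + q ^ 10*b ^ 2*d ^ 4*e*(u 1) + 4*q ^ 10*ω*d ^ 5*e ^ 2*(u 1) - q ^ 10*ω*c*d ^ 6*(u 1) + q ^ 10*ω*b*d ^ 5*e*(u 1) + q ^ 11*d ^ 4*e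 ^ 3*(u 1) - q ^ 11*c*d ^ 5*e*(u 1) + 2*q ^ 11*b*d ^ 4*e ^ 2*(u 1) + q ^ 11*ω*d ^ 5*e ^ 2*(u 1) + q ^ 12*d ^ 4*e ^ 3*(u 1)) * hf2 + (-q ^ 3*c*d ^ 6*(u 1) + q ^ 3*b*d ^ 5*e*(u 1) + q ^ 4*d ^ 5*e ^ 2*(u 1) - 2*q ^ 4*c*d ^ 6*(u 1) + 2*q ^ 4*b*d ^ 5*e*(u 1) + 3*q ^ 4*ω*b*d ^ 6*(u 1) - 3*q ^ 4*ω ^ 2*d ^ 7*(u 1) + 2*q ^ 5*d ^ 5*e ^ 2*(u 1) - 3*q ^ 5*c*d ^ 6*(u 1) + 3*q ^ 5*b*d ^ 5*e*(u 1) + 3*q ^ 5*ω*d ^ 6*e*(u 1) + 5*q ^ 5*ω*b*d ^ 6*(u 1) - 3*q ^ 5*ω ^ 2*d ^ 7*(u 1) + 3*q ^ 6*d ^ 5*e ^ 2*(u 1) - 3*q ^ 6*c*d ^ 6*(u 1) + 3*q ^ 6*b*d ^ 5*e*(u 1) + 5*q ^ 6*ω*d ^ 6*e*(u 1) + 3*q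 ^ 6*ω*b*d ^ 6*(u 1) + 3*q ^ 7*d ^ 5*e ^ 2*(u 1) - 3*q ^ 7*c*d ^ 6*(u 1) + 3*q ^ 7*b*d ^ 5*e*(u 1) + 3*q ^ 7*ω*d ^ 6*e*(u 1) + q ^ 7*ω*b*d ^ 6*(u 1) + 3*q ^ 8*d ^ 5*e ^ 2*(u 1) - 2*q ^ 8*c*d ^ 6*(u 1) + 2*q ^ 8*b*d ^ 5*e*(u 1) + q ^ 8*ω*d ^ 6*e*(u 1) + 2*q ^ 9*d ^ 5*e ^ 2*(u 1) - q ^ 9*c*d ^ 6*(u 1) + q ^ 9*b*d ^ 5*e*(u 1) + q ^ 10*d ^ 5*e ^ 2*(u 1)) * hf3 + (q ^ 4*b*d ^ 6*(u 1) - 3*q ^ 4*ω*d ^ 7*(u 1) + q ^ 5*d ^ 6*e*(u 1) + 2*q ^ 5*b*d ^ 6*(u 1) - 5*q ^ 5*ω*d ^ 7*(u 1) + 2*q ^ 6*d ^ 6*e*(u 1) + 2*q ^ 6*b*d ^ 6*(u 1) - 3*q ^ 6*ω*d ^ 7*(u 1) + 2*q ^ 7*d ^ 6*e*(u 1) + q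 ^ 7*b*d ^ 6*(u 1) - q ^ 7*ω*d ^ 7*(u 1) + q ^ 8*d ^ 6*e*(u 1)) * hf4 + (-q ^ 4*d ^ 7*(u 1) - 2*q ^ 5*d ^ 7*(u 1) - 2*q ^ 6*d ^ 7*(u 1) - q ^ 7*d ^ 7*(u 1)) * hf5 + (q ^ 2*b*c*d ^ 4*e*(u 1)*(u (X ^ 2)) + q ^ 2*b*c*d ^ 5*(u 1)*(u (X ^ 3)) - q ^ 2*b ^ 2*d ^ 4*e*(u 1)*(u (X ^ 3)) - q ^ 2*b ^ 2*d ^ 5*(u (X ^ 2)) ^ 2 - q ^ 3*c*d ^ 6*(u (X ^ 2)) ^ 2 + q ^ 3*c*d ^ 6*(u 1)*(u (X ^ 4)) - q ^ 3*b*d ^ 4*e ^ 2*(u 1)*(u (X ^ 3)) - q ^ 3*b*d ^ 5*e*(u 1)*(u (X ^ 4)) + 3*q ^ 3*b*c*d ^ 4*e*(u 1)*(u (X ^ 2)) + 3*q ^ 3*b*c*d ^ 5*(u 1)*(u (X ^ 3)) - 3*q ^ 3*b ^ 2*d ^ 4*e*(u 1)*(u (X ^ 3)) - 3*q ^ 3*b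 ^ 2*d ^ 5*(u (X ^ 2)) ^ 2 - q ^ 3*ω*c*d ^ 5*e*(u 1)*(u (X ^ 2)) - q ^ 3*ω*c*d ^ 6*(u 1)*(u (X ^ 3)) + q ^ 3*ω*b*d ^ 4*e ^ 2*(u 1)*(u (X ^ 2)) + q ^ 3*ω*b*d ^ 5*e*(u 1)*(u (X ^ 3)) - q ^ 4*d ^ 5*e ^ 2*(u 1)*(u (X ^ 4)) + q ^ 4*d ^ 7*(u 1)*(u (X ^ 6)) - q ^ 4*c*d ^ 4*e ^ 2*(u 1)*(u (X ^ 2)) - q ^ 4*c*d ^ 5*e*(u 1)*(u (X ^ 3)) - 3*q ^ 4*c*d ^ 6*(u (X ^ 2)) ^ 2 + 3*q ^ 4*c*d ^ 6*(u 1)*(u (X ^ 4)) - 2*q ^ 4*b*d ^ 4*e ^ 2*(u 1)*(u (X ^ 3)) - 3*q ^ 4*b*d ^ 5*e*(u 1)*(u (X ^ 4)) - q ^ 4*b*d ^ 6*(u 1)*(u (X ^ 5)) + 5*q ^ 4*b*c*d ^ 4*e*(u 1)*(u (X ^ 2)) + 5*q ^ 4*b*c*d ^ 5*(u 1)*(u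 (X ^ 3)) - 5*q ^ 4*b ^ 2*d ^ 4*e*(u 1)*(u (X ^ 3)) - 5*q ^ 4*b ^ 2*d ^ 5*(u (X ^ 2)) ^ 2 + q ^ 4*ω*d ^ 5*e ^ 2*(u 1)*(u (X ^ 3)) - q ^ 4*ω*d ^ 7*(u 1)*(u (X ^ 5)) - 2*q ^ 4*ω*c*d ^ 5*e*(u 1)*(u (X ^ 2)) - 2*q ^ 4*ω*c*d ^ 6*(u 1)*(u (X ^ 3)) + 2*q ^ 4*ω*b*d ^ 4*e ^ 2*(u 1)*(u (X ^ 2)) + 2*q ^ 4*ω*b*d ^ 5*e*(u 1)*(u (X ^ 3)) + q ^ 5*d ^ 4*e ^ 3*(u 1)*(u (X ^ 3)) - 3*q ^ 5*d ^ 5*e ^ 2*(u 1)*(u (X ^ 4)) - q ^ 5*d ^ 6*e*(u 1)*(u (X ^ 5)) + 3*q ^ 5*d ^ 7*(u 1)*(u (X ^ 6)) - 3*q ^ 5*c*d ^ 4*e ^ 2*(u 1)*(u (X ^ 2)) - 3*q ^ 5*c*d ^ 5*e*(u 1)*(u (X ^ 3)) - 6*q ^ 5*c*d ^ 6*(u (X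 ^ 2)) ^ 2 + 6*q ^ 5*c*d ^ 6*(u 1)*(u (X ^ 4)) - 2*q ^ 5*b*d ^ 4*e ^ 2*(u 1)*(u (X ^ 3)) + q ^ 5*b*d ^ 5*e*(u (X ^ 2)) ^ 2 - 6*q ^ 5*b*d ^ 5*e*(u 1)*(u (X ^ 4)) - 3*q ^ 5*b*d ^ 6*(u 1)*(u (X ^ 5)) + 6*q ^ 5*b*c*d ^ 4*e*(u 1)*(u (X ^ 2)) + 6*q ^ 5*b*c*d ^ 5*(u 1)*(u (X ^ 3)) - 6*q ^ 5*b ^ 2*d ^ 4*e*(u 1)*(u (X ^ 3)) - 6*q ^ 5*b ^ 2*d ^ 5*(u (X ^ 2)) ^ 2 - q ^ 5*ω*d ^ 4*e ^ 3*(u 1)*(u (X ^ 2)) + 2*q ^ 5*ω*d ^ 5*e ^ 2*(u 1)*(u (X ^ 3)) - 3*q ^ 5*ω*d ^ 7*(u 1)*(u (X ^ 5)) - 3*q ^ 5*ω*c*d ^ 5*e*(u 1)*(u (X ^ 2)) - 3*q ^ 5*ω*c*d ^ 6*(u 1)*(u (X ^ 3)) + 3*q ^ 5*ω*b*d ^ 4*e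 ^ 2*(u 1)*(u (X ^ 2)) + 3*q ^ 5*ω*b*d ^ 5*e*(u 1)*(u (X ^ 3)) + q ^ 5*ω ^ 3*d ^ 6*e*(u 1)*(u (X ^ 2)) + q ^ 5*ω ^ 3*d ^ 7*(u 1)*(u (X ^ 3)) + 3*q ^ 6*d ^ 4*e ^ 3*(u 1)*(u (X ^ 3)) + q ^ 6*d ^ 5*e ^ 2*(u (X ^ 2)) ^ 2 - 6*q ^ 6*d ^ 5*e ^ 2*(u 1)*(u (X ^ 4)) - 3*q ^ 6*d ^ 6*e*(u 1)*(u (X ^ 5)) + 5*q ^ 6*d ^ 7*(u 1)*(u (X ^ 6)) - 5*q ^ 6*c*d ^ 4*e ^ 2*(u 1)*(u (X ^ 2)) - 5*q ^ 6*c*d ^ 5*e*(u 1)*(u (X ^ 3)) - 8*q ^ 6*c*d ^ 6*(u (X ^ 2)) ^ 2 + 8*q ^ 6*c*d ^ 6*(u 1)*(u (X ^ 4)) - q ^ 6*b*d ^ 4*e ^ 2*(u 1)*(u (X ^ 3)) + 2*q ^ 6*b*d ^ 5*e*(u (X ^ 2)) ^ 2 - 8*q ^ 6*b*d ^ 5*e*(u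 1)*(u (X ^ 4)) - 5*q ^ 6*b*d ^ 6*(u 1)*(u (X ^ 5)) + 6*q ^ 6*b*c*d ^ 4*e*(u 1)*(u (X ^ 2)) + 6*q ^ 6*b*c*d ^ 5*(u 1)*(u (X ^ 3)) - 6*q ^ 6*b ^ 2*d ^ 4*e*(u 1)*(u (X ^ 3)) - 6*q ^ 6*b ^ 2*d ^ 5*(u (X ^ 2)) ^ 2 - 2*q ^ 6*ω*d ^ 4*e ^ 3*(u 1)*(u (X ^ 2)) + 3*q ^ 6*ω*d ^ 5*e ^ 2*(u 1)*(u (X ^ 3)) - 5*q ^ 6*ω*d ^ 7*(u 1)*(u (X ^ 5)) + 3*q ^ 6*ω*b*d ^ 4*e ^ 2*(u 1)*(u (X ^ 2)) - 3*q ^ 6*ω*b*d ^ 6*(u (X ^ 2)) ^ 2 - 3*q ^ 6*ω ^ 2*d ^ 7*(u (X ^ 2)) ^ 2 + 3*q ^ 6*ω ^ 2*d ^ 7*(u 1)*(u (X ^ 4)) + 5*q ^ 7*d ^ 4*e ^ 3*(u 1)*(u (X ^ 3)) + 2*q ^ 7*d ^ 5*e ^ 2*(u (X ^ 2)) ^ 2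 - 8*q ^ 7*d ^ 5*e ^ 2*(u 1)*(u (X ^ 4)) - 5*q ^ 7*d ^ 6*e*(u 1)*(u (X ^ 5)) + 6*q ^ 7*d ^ 7*(u 1)*(u (X ^ 6)) - 6*q ^ 7*c*d ^ 4*e ^ 2*(u 1)*(u (X ^ 2)) - 6*q ^ 7*c*d ^ 5*e*(u 1)*(u (X ^ 3)) - 9*q ^ 7*c*d ^ 6*(u (X ^ 2)) ^ 2 + 9*q ^ 7*c*d ^ 6*(u 1)*(u (X ^ 4)) + 3*q ^ 7*b*d ^ 5*e*(u (X ^ 2)) ^ 2 - 9*q ^ 7*b*d ^ 5*e*(u 1)*(u (X ^ 4)) - 6*q ^ 7*b*d ^ 6*(u 1)*(u (X ^ 5)) + 6*q ^ 7*b*c*d ^ 4*e*(u 1)*(u (X ^ 2)) + 6*q ^ 7*b*c*d ^ 5*(u 1)*(u (X ^ 3)) - 6*q ^ 7*b ^ 2*d ^ 4*e*(u 1)*(u (X ^ 3)) - 6*q ^ 7*b ^ 2*d ^ 5*(u (X ^ 2)) ^ 2 - 3*q ^ 7*ω*d ^ 4*e ^ 3*(u 1)*(u (X ^ 2)) - 3*q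 ^ 7*ω*d ^ 7*(u 1)*(u (X ^ 5)) + 6*q ^ 7*ω*c*d ^ 5*e*(u 1)*(u (X ^ 2)) + 6*q ^ 7*ω*c*d ^ 6*(u 1)*(u (X ^ 3)) + 3*q ^ 7*ω*b*d ^ 4*e ^ 2*(u 1)*(u (X ^ 2)) - 6*q ^ 7*ω*b*d ^ 5*e*(u 1)*(u (X ^ 3)) - 9*q ^ 7*ω*b*d ^ 6*(u (X ^ 2)) ^ 2 + 3*q ^ 7*ω ^ 2*d ^ 5*e ^ 2*(u 1)*(u (X ^ 2)) - 6*q ^ 7*ω ^ 2*d ^ 7*(u (X ^ 2)) ^ 2 + 3*q ^ 7*ω ^ 2*d ^ 7*(u 1)*(u (X ^ 4)) - q ^ 7*ω ^ 3*d ^ 6*e*(u 1)*(u (X ^ 2)) - q ^ 7*ω ^ 3*d ^ 7*(u 1)*(u (X ^ 3)) + 6*q ^ 8*d ^ 4*e ^ 3*(u 1)*(u (X ^ 3)) + 3*q ^ 8*d ^ 5*e ^ 2*(u (X ^ 2)) ^ 2 - 9*q ^ 8*d ^ 5*e ^ 2*(u 1)*(u (X ^ 4)) - 6*q ^ 8*d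 ^ 6*e*(u 1)*(u (X ^ 5)) + 6*q ^ 8*d ^ 7*(u 1)*(u (X ^ 6)) - 5*q ^ 8*c*d ^ 4*e ^ 2*(u 1)*(u (X ^ 2)) - 5*q ^ 8*c*d ^ 5*e*(u 1)*(u (X ^ 3)) - 8*q ^ 8*c*d ^ 6*(u (X ^ 2)) ^ 2 + 8*q ^ 8*c*d ^ 6*(u 1)*(u (X ^ 4)) - q ^ 8*b*d ^ 4*e ^ 2*(u 1)*(u (X ^ 3)) + 2*q ^ 8*b*d ^ 5*e*(u (X ^ 2)) ^ 2 - 8*q ^ 8*b*d ^ 5*e*(u 1)*(u (X ^ 4)) - 5*q ^ 8*b*d ^ 6*(u 1)*(u (X ^ 5)) + 6*q ^ 8*b*c*d ^ 4*e*(u 1)*(u (X ^ 2)) + 6*q ^ 8*b*c*d ^ 5*(u 1)*(u (X ^ 3)) - 6*q ^ 8*b ^ 2*d ^ 4*e*(u 1)*(u (X ^ 3)) - 6*q ^ 8*b ^ 2*d ^ 5*(u (X ^ 2)) ^ 2 - 3*q ^ 8*ω*d ^ 4*e ^ 3*(u 1)*(u (X ^ 2)) - 6*q ^ 8*ω*d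 ^ 5*e ^ 2*(u 1)*(u (X ^ 3)) - 3*q ^ 8*ω*d ^ 6*e*(u (X ^ 2)) ^ 2 + 9*q ^ 8*ω*c*d ^ 5*e*(u 1)*(u (X ^ 2)) + 9*q ^ 8*ω*c*d ^ 6*(u 1)*(u (X ^ 3)) + 3*q ^ 8*ω*b*d ^ 4*e ^ 2*(u 1)*(u (X ^ 2)) - 9*q ^ 8*ω*b*d ^ 5*e*(u 1)*(u (X ^ 3)) - 12*q ^ 8*ω*b*d ^ 6*(u (X ^ 2)) ^ 2 + 6*q ^ 8*ω ^ 2*d ^ 5*e ^ 2*(u 1)*(u (X ^ 2)) - 6*q ^ 8*ω ^ 2*d ^ 7*(u (X ^ 2)) ^ 2 + 5*q ^ 9*d ^ 4*e ^ 3*(u 1)*(u (X ^ 3)) + 3*q ^ 9*d ^ 5*e ^ 2*(u (X ^ 2)) ^ 2 - 8*q ^ 9*d ^ 5*e ^ 2*(u 1)*(u (X ^ 4)) - 5*q ^ 9*d ^ 6*e*(u 1)*(u (X ^ 5)) + 5*q ^ 9*d ^ 7*(u 1)*(u (X ^ 6)) - 2*q ^ 9*c*d ^ 4*e ^ 2*(u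 1)*(u (X ^ 2)) - 2*q ^ 9*c*d ^ 5*e*(u 1)*(u (X ^ 3)) - 6*q ^ 9*c*d ^ 6*(u (X ^ 2)) ^ 2 + 6*q ^ 9*c*d ^ 6*(u 1)*(u (X ^ 4)) - 4*q ^ 9*b*d ^ 4*e ^ 2*(u 1)*(u (X ^ 3)) - q ^ 9*b*d ^ 5*e*(u (X ^ 2)) ^ 2 - 6*q ^ 9*b*d ^ 5*e*(u 1)*(u (X ^ 4)) - 3*q ^ 9*b*d ^ 6*(u 1)*(u (X ^ 5)) + 5*q ^ 9*b*c*d ^ 4*e*(u 1)*(u (X ^ 2)) + 5*q ^ 9*b*c*d ^ 5*(u 1)*(u (X ^ 3)) - 5*q ^ 9*b ^ 2*d ^ 4*e*(u 1)*(u (X ^ 3)) - 5*q ^ 9*b ^ 2*d ^ 5*(u (X ^ 2)) ^ 2 - 2*q ^ 9*ω*d ^ 4*e ^ 3*(u 1)*(u (X ^ 2)) - 9*q ^ 9*ω*d ^ 5*e ^ 2*(u 1)*(u (X ^ 3)) - 7*q ^ 9*ω*d ^ 6*e*(u (X ^ 2)) ^ 2 + 7*q ^ 9*ω*c*d ^ 5*e*(u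 1)*(u (X ^ 2)) + 7*q ^ 9*ω*c*d ^ 6*(u 1)*(u (X ^ 3)) + 3*q ^ 9*ω*b*d ^ 4*e ^ 2*(u 1)*(u (X ^ 2)) - 7*q ^ 9*ω*b*d ^ 5*e*(u 1)*(u (X ^ 3)) - 10*q ^ 9*ω*b*d ^ 6*(u (X ^ 2)) ^ 2 + 5*q ^ 9*ω ^ 2*d ^ 5*e ^ 2*(u 1)*(u (X ^ 2)) - 5*q ^ 9*ω ^ 2*d ^ 7*(u (X ^ 2)) ^ 2 + 2*q ^ 10*d ^ 4*e ^ 3*(u 1)*(u (X ^ 3)) + 2*q ^ 10*d ^ 5*e ^ 2*(u (X ^ 2)) ^ 2 - 6*q ^ 10*d ^ 5*e ^ 2*(u 1)*(u (X ^ 4)) - 3*q ^ 10*d ^ 6*e*(u 1)*(u (X ^ 5)) + 3*q ^ 10*d ^ 7*(u 1)*(u (X ^ 6)) + q ^ 10*c*d ^ 4*e ^ 2*(u 1)*(u (X ^ 2)) + q ^ 10*c*d ^ 5*e*(u 1)*(u (X ^ 3)) - 3*q ^ 10*c*d ^ 6*(u (X ^ 2)) ^ 2 + 3*q ^ 10*c*d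 ^ 6*(u 1)*(u (X ^ 4)) - 6*q ^ 10*b*d ^ 4*e ^ 2*(u 1)*(u (X ^ 3)) - 4*q ^ 10*b*d ^ 5*e*(u (X ^ 2)) ^ 2 - 3*q ^ 10*b*d ^ 5*e*(u 1)*(u (X ^ 4)) - q ^ 10*b*d ^ 6*(u 1)*(u (X ^ 5)) + 3*q ^ 10*b*c*d ^ 4*e*(u 1)*(u (X ^ 2)) + 3*q ^ 10*b*c*d ^ 5*(u 1)*(u (X ^ 3)) - 3*q ^ 10*b ^ 2*d ^ 4*e*(u 1)*(u (X ^ 3)) - 3*q ^ 10*b ^ 2*d ^ 5*(u (X ^ 2)) ^ 2 - 7*q ^ 10*ω*d ^ 5*e ^ 2*(u 1)*(u (X ^ 3)) - 7*q ^ 10*ω*d ^ 6*e*(u (X ^ 2)) ^ 2 + 4*q ^ 10*ω*c*d ^ 5*e*(u 1)*(u (X ^ 2)) + 4*q ^ 10*ω*c*d ^ 6*(u 1)*(u (X ^ 3)) + 2*q ^ 10*ω*b*d ^ 4*e ^ 2*(u 1)*(u (X ^ 2)) - 4*q ^ 10*ω*b*d ^ 5*e*(u 1)*(u (X ^ 3))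 - 6*q ^ 10*ω*b*d ^ 6*(u (X ^ 2)) ^ 2 + 3*q ^ 10*ω ^ 2*d ^ 5*e ^ 2*(u 1)*(u (X ^ 2)) - 3*q ^ 10*ω ^ 2*d ^ 7*(u (X ^ 2)) ^ 2 - q ^ 11*d ^ 4*e ^ 3*(u 1)*(u (X ^ 3)) - 3*q ^ 11*d ^ 5*e ^ 2*(u 1)*(u (X ^ 4)) - q ^ 11*d ^ 6*e*(u 1)*(u (X ^ 5)) + q ^ 11*d ^ 7*(u 1)*(u (X ^ 6)) + 2*q ^ 11*c*d ^ 4*e ^ 2*(u 1)*(u (X ^ 2)) + 2*q ^ 11*c*d ^ 5*e*(u 1)*(u (X ^ 3)) - q ^ 11*c*d ^ 6*(u (X ^ 2)) ^ 2 + q ^ 11*c*d ^ 6*(u 1)*(u (X ^ 4)) - 5*q ^ 11*b*d ^ 4*e ^ 2*(u 1)*(u (X ^ 3)) - 4*q ^ 11*b*d ^ 5*e*(u (X ^ 2)) ^ 2 - q ^ 11*b*d ^ 5*e*(u 1)*(u (X ^ 4)) + q ^ 11*b*c*d ^ 4*e*(u 1)*(u (X ^ 2)) + q ^ 11*b*c*d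 ^ 5*(u 1)*(u (X ^ 3)) - q ^ 11*b ^ 2*d ^ 4*e*(u 1)*(u (X ^ 3)) - q ^ 11*b ^ 2*d ^ 5*(u (X ^ 2)) ^ 2 + q ^ 11*ω*d ^ 4*e ^ 3*(u 1)*(u (X ^ 2)) - 4*q ^ 11*ω*d ^ 5*e ^ 2*(u 1)*(u (X ^ 3)) - 5*q ^ 11*ω*d ^ 6*e*(u (X ^ 2)) ^ 2 + q ^ 11*ω*c*d ^ 5*e*(u 1)*(u (X ^ 2)) + q ^ 11*ω*c*d ^ 6*(u 1)*(u (X ^ 3)) + q ^ 11*ω*b*d ^ 4*e ^ 2*(u 1)*(u (X ^ 2)) - q ^ 11*ω*b*d ^ 5*e*(u 1)*(u (X ^ 3)) - 2*q ^ 11*ω*b*d ^ 6*(u (X ^ 2)) ^ 2 + q ^ 11*ω ^ 2*d ^ 5*e ^ 2*(u 1)*(u (X ^ 2)) - q ^ 11*ω ^ 2*d ^ 7*(u (X ^ 2)) ^ 2 - 2*q ^ 12*d ^ 4*e ^ 3*(u 1)*(u (X ^ 3)) - q ^ 12*d ^ 5*e ^ 2*(u (X ^ 2)) ^ 2 - q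 ^ 12*d ^ 5*e ^ 2*(u 1)*(u (X ^ 4)) + q ^ 12*c*d ^ 4*e ^ 2*(u 1)*(u (X ^ 2)) + q ^ 12*c*d ^ 5*e*(u 1)*(u (X ^ 3)) - 2*q ^ 12*b*d ^ 4*e ^ 2*(u 1)*(u (X ^ 3)) - 2*q ^ 12*b*d ^ 5*e*(u (X ^ 2)) ^ 2 + q ^ 12*ω*d ^ 4*e ^ 3*(u 1)*(u (X ^ 2)) - q ^ 12*ω*d ^ 5*e ^ 2*(u 1)*(u (X ^ 3)) - 2*q ^ 12*ω*d ^ 6*e*(u (X ^ 2)) ^ 2 - q ^ 13*d ^ 4*e ^ 3*(u 1)*(u (X ^ 3)) - q ^ 13*d ^ 5*e ^ 2*(u (X ^ 2)) ^ 2) * hB'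
    have hK3' : (q*d ^ 3) * (u (X ^ 6)) + (-b*d ^ 2 - q*b*d ^ 2 - q*ω*d ^ 3 - q ^ 2*d ^ 2*e) * (u (X ^ 5)) + (-b*d*e + b ^ 2*d + ω*b*d ^ 2 - q*d*e ^ 2 + q*b*d*e) * (u (X ^ 4)) + (b ^ 2*e + ω*b*d*e + 2*q*b*e ^ 2 + q*ω*d*e ^ 2 + q ^ 2*e ^ 3) * (u (X ^ 3)) = 0 := by
      rcases mul_eq_zero.mp hK3 with h | h
      · exact absurd h hSc3
      · exact h

    have hfin : (q * d ^ 3) * u (P 3 ^ 2) = 0 := by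
      linear_combination hK3' + r2 * hK2' + r1 * hK1' + r0 * hK0'
        - (q*d ^ 3) * hT3 - (-b*d ^ 2 - q*b*d ^ 2 - q*ω*d ^ 3 - q ^ 2*d ^ 2*e) * hT2 - (-b*d*e + b ^ 2*d + ω*b*d ^ 2 - q*d*e ^ 2 + q*b*d*e) * hT1 - (b ^ 2*e + ω*b*d*e + 2*q*b*e ^ 2 + q*ω*d*e ^ 2 + q ^ 2*e ^ 3) * hT0
    rcases mul_eq_zero.mp hfin with h' | h'
    · exact (mul_ne_zero hq0 (pow_ne_zero _ hd)) h'
    · exact hPne 3 h'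
  have hM2v : d * (d * q + a) * u (X ^ 2) = ((q * e + b) * e - c * d) * u 1 := by
    linear_combination d * hf1 - (q * e + b) * hf0
  have hpv : d * p = e := by
    have h : (d * p - e) * u 1 = 0 := by linear_combination d * hq1e - hf0
    rcases mul_eq_zero.mp h with h' | h'
    · linear_combination h'
    · exact absurd h' hM0
  refine ⟨?_, ?_, ?_⟩
  · have key : (u (X ^ 2) + 2*p*u X + p^2 * u 1) * (d^2 * (d*q+a)) = -(a*e^2 - b*e*d + c*d^2) * u 1 := by
      linear_combination d * hM2v + (2*p*d^2*(d*q+a)) * hq1e - ((d*q+a)*(e + p*d)*(u 1)) * hpv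
    rw [hP1sq, hφ]
    simp only [eval_add, eval_mul, eval_pow, eval_C, eval_X]
    rw [div_eq_iff hM0]
    field_simp
    linear_combination key
  · field_simp
    linear_combination hf0
  · field_simp
    linear_combination hM2v

end HahnOPSPaper
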